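/- arXiv:2506.00372 — 5 statements merged into one kernel-verified Lean document; each statement's English description precedes it below -/
import Mathlib

section
/- Assume the outside option setup (𝒜_N = {a₀}), that a₀ ∈ D for every D ∈ 𝒟, and that 𝒳 has at least |𝒜_A| + 2 elements. Then for every linear order ≻ on 𝒜 and every collection 𝓔 ⊆ 𝒟, the deterministic stochastic choice function ρ^≻_𝓔 is RU-rational. -/
open Finset

noncomputable section

/-- A ranking (strict linear order) on a finite type `T`, encoded as a bijection with
`Fin (Fintype.card T)`; a lower index means a better alternative. -/
abbrev Ranking (T : Type) [Fintype T] : Type := T ≃ Fin (Fintype.card T)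

/-- `x` is strictly preferred to `y` according to the ranking `r`. -/
def Ranking.pref {T : Type} [Fintype T] (r : Ranking T) (x y : T) : Prop :=
  r x < r y

/-- The `r`-best (most preferred) element of a nonempty finite set `D`. -/
def Ranking.best {T : Type} [Fintype T] [DecidableEq T] (r : Ranking T) (D : Finset T)
    (hD : D.Nonempty) : T :=
  r.symm ((D.image fun x => r x).min' (hD.image fun x => r x))

/-- `μ` is a probability distribution on the finite type `T`. -/
def IsDistr {T : Type} [Fintype T] (μ : T → ℝ) : Prop :=
  (∀ t, 0 ≤ μ t) ∧ (∑ t, μ t) = 1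

open Classical in
/-- The probability of the event `P` under the distribution `μ`. -/
def probOf {T : Type} [Fintype T] (μ : T → ℝ) (P : T → Prop) : ℝ :=
  ∑ t, if P t then μ t else 0

/-- `ρ` is a stochastic choice function on the domain `𝒟`: on every menu of the domain it is
nonnegative, sums to one over the menu, and vanishes outside the menu. -/
def IsSCF {A : Type} [Fintype A] [DecidableEq A] (𝒟 : Finset (Finset A))
    (ρ : Finset A → A → ℝ) : Prop :=
  ∀ B ∈ 𝒟, (∀ a ∈ B, 0 ≤ ρ B a) ∧ ((∑ a ∈ B, ρ B a) = 1) ∧ (∀ a ∉ B, ρ B a = 0)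

/-- An aggregation correspondence for the set `AN` of non-atomic aggregates: pairwise disjoint
nonempty sets of underlying alternatives, singletons exactly on atomic aggregates. -/
structure AggCorr (A 𝒳 : Type) [Fintype A] [DecidableEq A] [Fintype 𝒳] [DecidableEq 𝒳]
    (AN : Finset A) where
  X : A → Finset 𝒳
  disj : ∀ a b, a ≠ b → Disjoint (X a) (X b)
  atomic : ∀ a ∉ AN, (X a).card = 1
  nonatomic : ∀ a ∈ AN, 2 ≤ (X a).card

/-- `lam` is a composition distribution for the aggregation correspondence `Xc` on the domain
`𝒟`: for every menu `B ∈ 𝒟` it is a probability distribution over profiles `S` of nonempty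
subsets `S a ⊆ X a`. -/
def IsCompDistr {A 𝒳 : Type} [Fintype A] [DecidableEq A] [Fintype 𝒳] [DecidableEq 𝒳]
    {AN : Finset A} (Xc : AggCorr A 𝒳 AN) (𝒟 : Finset (Finset A))
    (lam : Finset A → (A → Finset 𝒳) → ℝ) : Prop :=
  ∀ B ∈ 𝒟, IsDistr (lam B) ∧
    ∀ S : A → Finset 𝒳, lam B S ≠ 0 → ∀ a, S a ⊆ Xc.X a ∧ (S a).Nonempty

/-- The pair `(μ, lam)` (for the aggregation correspondence `Xc`) rationalizes `ρ` on `𝒟`. -/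
def Rationalizes {A 𝒳 : Type} [Fintype A] [DecidableEq A] [Fintype 𝒳] [DecidableEq 𝒳]
    {AN : Finset A} (Xc : AggCorr A 𝒳 AN) (𝒟 : Finset (Finset A))
    (μ : Ranking 𝒳 → ℝ) (lam : Finset A → (A → Finset 𝒳) → ℝ)
    (ρ : Finset A → A → ℝ) : Prop :=
  IsDistr μ ∧ IsCompDistr Xc 𝒟 lam ∧
    ∀ B ∈ 𝒟, ∀ a ∈ B,
      ρ B a = ∑ S : A → Finset 𝒳, lam B S *
        probOf μ (fun r => ∃ x ∈ S a, ∀ b ∈ B, b ≠ a → ∀ y ∈ S b, Ranking.pref r x y)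

/-- RU-rationality: some pair `(μ, lam)` for some aggregation correspondence with underlying
alternatives `𝒳` and non-atomic aggregates `AN` rationalizes `ρ`. -/
def RURational (𝒳 : Type) [Fintype 𝒳] [DecidableEq 𝒳] {A : Type} [Fintype A] [DecidableEq A]
    (AN : Finset A) (𝒟 : Finset (Finset A)) (ρ : Finset A → A → ℝ) : Prop :=
  ∃ Xc : AggCorr A 𝒳 AN, ∃ μ lam, Rationalizes Xc 𝒟 μ lam ρ

/-- ARU-rationality: `ρ` is a random utility model over the aggregates themselves. -/
def ARURational {A : Type} [Fintype A] [DecidableEq A]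
    (𝒟 : Finset (Finset A)) (ρ : Finset A → A → ℝ) : Prop :=
  ∃ μA : Ranking A → ℝ, IsDistr μA ∧
    ∀ B ∈ 𝒟, ∀ a ∈ B, ρ B a = probOf μA (fun r => ∀ b ∈ B, b ≠ a → Ranking.pref r a b)

/-- Partial RU-rationality: on menus of atomic aggregates only, `ρ` is a random utility model
over linear orders on the atomic aggregates `AA`. -/
def PartialRURational {A : Type} [Fintype A] [DecidableEq A]
    (AA : Finset A) (𝒟 : Finset (Finset A)) (ρ : Finset A → A → ℝ) : Prop :=
  ∃ ν : Ranking {c : A // c ∈ AA} → ℝ, IsDistr ν ∧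
    ∀ B ∈ 𝒟, ∀ (hB : B ⊆ AA), ∀ a, ∀ (ha : a ∈ B),
      ρ B a = probOf ν (fun r =>
        ∀ b : {c : A // c ∈ AA}, (b : A) ∈ B → (b : A) ≠ a → Ranking.pref r ⟨a, hB ha⟩ b)

/-- Limited Monotonicity (outside-option form): adding the outside option `a0` to a menu of
atomic aggregates weakly decreases every atomic choice frequency. -/
def LimitedMono {A : Type} [Fintype A] [DecidableEq A]
    (a0 : A) (AA : Finset A) (𝒟 : Finset (Finset A)) (ρ : Finset A → A → ℝ) : Prop :=
  ∀ D : Finset A, D ⊆ AA → D ∈ 𝒟 → insert a0 D ∈ 𝒟 →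
    ∀ b ∈ D, ρ (insert a0 D) b ≤ ρ D b

/-- Limited Monotonicity (general form): adding any set `E` of non-atomic aggregates to a menu
of atomic aggregates weakly decreases every atomic choice frequency. -/
def LimitedMonoGen {A : Type} [Fintype A] [DecidableEq A]
    (AA AN : Finset A) (𝒟 : Finset (Finset A)) (ρ : Finset A → A → ℝ) : Prop :=
  ∀ D E : Finset A, D ⊆ AA → E ⊆ AN → D ∈ 𝒟 → D ∪ E ∈ 𝒟 →
    ∀ b ∈ D, ρ (D ∪ E) b ≤ ρ D b

/-- The full domain: all nonempty subsets of `A`. -/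
def fullDomain (A : Type) [Fintype A] [DecidableEq A] : Finset (Finset A) :=
  Finset.univ.filter fun D => D.Nonempty

/-- The deterministic "menu-effect" stochastic choice function `ρ^≻_𝓔`: it puts probability 1
on the `r`-maximum of `D` if `a0 ∉ D` or `D ∈ E`, and probability 1 on `a0` otherwise. -/
def vertexSCF {A : Type} [Fintype A] [DecidableEq A]
    (a0 : A) (r : Ranking A) (E : Finset (Finset A)) : Finset A → A → ℝ :=
  fun D a =>
    if h : D.Nonempty then
      if a0 ∉ D ∨ D ∈ E then (if a = Ranking.best r D h then 1 else 0)
      else (if a = a0 then 1 else 0)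
    else 0

open Classical in
/-- The deterministic menu-effect stochastic choice function with multiple non-atomic
aggregates: on a menu `D` belonging to `E b` (for the necessarily unique such `b`, the
collections being pairwise disjoint) it puts probability 1 on `b`; otherwise it puts
probability 1 on the `r`-maximum of `D`. -/
def vertexSCFM {A : Type} [Fintype A] [DecidableEq A]
    (r : Ranking A) (E : A → Finset (Finset A)) : Finset A → A → ℝ :=
  fun D a =>
    if h : D.Nonempty then
      if hex : ∃ b, D ∈ E b then (if a = Classical.choose hex then 1 else 0)
      else (if a = Ranking.best r D h then 1 else 0)
    else 0

/-- Restriction of a choice function to the coordinates `(D, a)` with `D ∈ 𝒟`, viewed as a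
vector in `ℝ^(Finset A × A)`. -/
def restrictTo {A : Type} [Fintype A] [DecidableEq A] (𝒟 : Finset (Finset A))
    (ρ : Finset A → A → ℝ) : Finset A × A → ℝ :=
  fun p => if p.1 ∈ 𝒟 then ρ p.1 p.2 else 0

/-- `RU(n)` (outside-option setup): `ρ` is rationalized by some pair whose aggregation
correspondence satisfies `|X(a0)| = n`. -/
def RUn (𝒳 : Type) [Fintype 𝒳] [DecidableEq 𝒳] {A : Type} [Fintype A] [DecidableEq A]
    (a0 : A) (𝒟 : Finset (Finset A)) (n : ℕ) (ρ : Finset A → A → ℝ) : Prop :=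
  ∃ Xc : AggCorr A 𝒳 ({a0} : Finset A), (Xc.X a0).card = n ∧
    ∃ μ lam, Rationalizes Xc 𝒟 μ lam ρ

/-- `RU((n_a))`: `ρ` is rationalized by some pair whose aggregation correspondence satisfies
`|X(a)| = nv a` for every non-atomic aggregate `a`. -/
def RUvec (𝒳 : Type) [Fintype 𝒳] [DecidableEq 𝒳] {A : Type} [Fintype A] [DecidableEq A]
    (AN : Finset A) (𝒟 : Finset (Finset A)) (nv : A → ℕ) (ρ : Finset A → A → ℝ) : Prop :=
  ∃ Xc : AggCorr A 𝒳 AN, (∀ a ∈ AN, (Xc.X a).card = nv a) ∧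
    ∃ μ lam, Rationalizes Xc 𝒟 μ lam ρ

/-- `μ` is non-overlapping for `Xc`: in every ranking in the support of `μ`, the underlying
alternatives of each non-atomic aggregate occupy adjacent positions. -/
def NonOverlapping {A 𝒳 : Type} [Fintype A] [DecidableEq A] [Fintype 𝒳] [DecidableEq 𝒳]
    {AN : Finset A} (Xc : AggCorr A 𝒳 AN) (μ : Ranking 𝒳 → ℝ) : Prop :=
  ∀ r : Ranking 𝒳, μ r ≠ 0 → ∀ a ∈ AN, ∀ y ∈ Xc.X a, ∀ z ∈ Xc.X a, ∀ x : 𝒳,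
    Ranking.pref r y x → Ranking.pref r x z → x ∈ Xc.X a

/-- `lam` is menu-independent: there is a single (unconditional) probability distribution over
full profiles whose marginal on the coordinates of each menu `B ∈ 𝒟` coincides with `lam B`. -/
def MenuIndependent {A 𝒳 : Type} [Fintype A] [DecidableEq A] [Fintype 𝒳] [DecidableEq 𝒳]
    {AN : Finset A} (Xc : AggCorr A 𝒳 AN) (𝒟 : Finset (Finset A))
    (lam : Finset A → (A → Finset 𝒳) → ℝ) : Prop :=
  ∃ lamBar : (A → Finset 𝒳) → ℝ, IsDistr lamBar ∧
    (∀ S : A → Finset 𝒳, lamBar S ≠ 0 → ∀ a, S a ⊆ Xc.X a ∧ (S a).Nonempty) ∧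
    ∀ B ∈ 𝒟, ∀ S0 : A → Finset 𝒳,
      probOf (lam B) (fun S => ∀ b ∈ B, S b = S0 b)
        = probOf lamBar (fun S => ∀ b ∈ B, S b = S0 b)

/-- Squared Euclidean distance between two stochastic choice functions on the coordinates of
the domain `𝒟`. -/
def distSq {A : Type} [Fintype A] [DecidableEq A] (𝒟 : Finset (Finset A))
    (ρ ρ' : Finset A → A → ℝ) : ℝ :=
  ∑ B ∈ 𝒟, ∑ a ∈ B, (ρ B a - ρ' B a) ^ 2

/-- Characterization of the best element. -/
lemma best_iff_aux {A : Type} [Fintype A] [DecidableEq A] (r : Ranking A) (D : Finset A)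
    (hD : D.Nonempty) (a : A) (ha : a ∈ D) :
    a = Ranking.best r D hD ↔ ∀ b ∈ D, b ≠ a → Ranking.pref r a b := by
  unfold Ranking.best Ranking.pref
  constructor
  · intro h b hb hba
    have hmin : r a = (D.image fun x => r x).min' (hD.image fun x => r x) := by
      rw [h, Equiv.apply_symm_apply]
    have hle : (D.image fun x => r x).min' (hD.image fun x => r x) ≤ r b :=
      Finset.min'_le _ _ (Finset.mem_image_of_mem _ hb)
    rw [← hmin] at hle
    exact lt_of_le_of_ne hle (fun hc => hba (r.injective hc.symm))
  · intro h
    rw [Equiv.eq_symm_apply]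
    apply le_antisymm
    · apply Finset.le_min'
      intro y hy
      obtain ⟨b, hb, rfl⟩ := Finset.mem_image.mp hy
      by_cases hba : b = a
      · subst hba; exact le_refl _
      · exact (h b hb hba).le
    · exact Finset.min'_le _ _ (Finset.mem_image_of_mem _ ha)

/-- **Remark 3.2**: every deterministic menu-effect choice function `ρ^≻_𝓔` is RU-rational,
provided `𝒳` has at least `|𝒜_A| + 2` elements. -/
theorem stmt4 {A 𝒳 : Type} [Fintype A] [DecidableEq A] [Fintype 𝒳] [DecidableEq 𝒳]
    (a0 : A) (𝒟 : Finset (Finset A)) (ha0 : ∀ D ∈ 𝒟, a0 ∈ D)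
    (hX : ({a0}ᶜ : Finset A).card + 2 ≤ Fintype.card 𝒳)
    (r : Ranking A) (E : Finset (Finset A)) (hE : E ⊆ 𝒟) :
    RURational 𝒳 ({a0} : Finset A) 𝒟 (vertexSCF a0 r E) := by
  classical
  -- cardinality facts
  have hcardA : 1 ≤ Fintype.card A := Fintype.card_pos_iff.mpr ⟨a0⟩
  have hcompl : ({a0}ᶜ : Finset A).card = Fintype.card A - 1 := by
    rw [Finset.card_compl, Finset.card_singleton]
  have hm : Fintype.card A + 1 ≤ Fintype.card 𝒳 := by
    rw [hcompl] at hX; omega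
  set n := Fintype.card 𝒳 with hn
  have hn0 : 0 < n := by omega
  let e : 𝒳 ≃ Fin n := Fintype.equivFin 𝒳
  have hpos : ∀ a : A, (r a : ℕ) + 1 < n := by
    intro a
    have := (r a).isLt
    omega
  let x : A → 𝒳 := fun a => e.symm ⟨(r a : ℕ) + 1, hpos a⟩
  let xp : 𝒳 := e.symm ⟨0, hn0⟩
  have hxinj : Function.Injective x := by
    intro a b hab
    have := e.symm.injective hab
    have hval : (r a : ℕ) + 1 = (r b : ℕ) + 1 := congrArg Fin.val this
    exact r.injective (Fin.ext (by omega))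
  have hxp_ne : ∀ a : A, xp ≠ x a := by
    intro a hc
    have := e.symm.injective hc
    have hval : (0 : ℕ) = (r a : ℕ) + 1 := congrArg Fin.val this
    omega
  -- preference facts under e
  have hprefxx : ∀ a b : A, Ranking.pref e (x a) (x b) ↔ Ranking.pref r a b := by
    intro a b
    unfold Ranking.pref
    simp only [x, Equiv.apply_symm_apply, Fin.lt_def]
    omega
  have hprefxp : ∀ a : A, Ranking.pref e xp (x a) := by
    intro a
    unfold Ranking.pref
    simp only [x, xp, Equiv.apply_symm_apply, Fin.lt_def]
    omega
  have hnotpref : ∀ a : A, ¬ Ranking.pref e (x a) xp := by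
    intro a hc
    unfold Ranking.pref at hc
    simp only [x, xp, Equiv.apply_symm_apply, Fin.lt_def] at hc
    omega
  -- the aggregation correspondence
  refine ⟨⟨fun a => if a = a0 then {xp, x a0} else {x a}, ?_, ?_, ?_⟩, ?_⟩
  · -- disjointness
    intro a b hab
    rw [Finset.disjoint_left]
    intro t ht htb
    by_cases ha : a = a0 <;> by_cases hb : b = a0
    · exact hab (ha.trans hb.symm)
    · rw [if_pos ha] at ht
      rw [if_neg hb, Finset.mem_singleton] at htb
      rcases Finset.mem_insert.mp ht with h1 | h1
      · exact hxp_ne b (h1.symm.trans htb)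
      · rw [Finset.mem_singleton] at h1
        exact hab (ha.trans (hxinj (h1.symm.trans htb)))
    · rw [if_pos hb] at htb
      rw [if_neg ha, Finset.mem_singleton] at ht
      rcases Finset.mem_insert.mp htb with h1 | h1
      · exact hxp_ne a (h1.symm.trans ht)
      · rw [Finset.mem_singleton] at h1
        exact ha (hxinj (ht.symm.trans h1))
    · rw [if_neg ha, Finset.mem_singleton] at ht
      rw [if_neg hb, Finset.mem_singleton] at htb
      exact hab (hxinj (ht.symm.trans htb))
  · -- atomic
    intro a ha
    rw [Finset.mem_singleton] at ha
    rw [if_neg ha, Finset.card_singleton]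
  · -- nonatomic
    intro a ha
    rw [Finset.mem_singleton] at ha
    rw [if_pos ha, Finset.card_pair (hxp_ne a0)]
  -- the distribution and composition distribution
  · let μ : Ranking 𝒳 → ℝ := fun t => if t = e then 1 else 0
    let Sprof : Finset A → A → Finset 𝒳 := fun B a =>
      if a = a0 then (if B ∈ E then {x a0} else {xp}) else {x a}
    let lam : Finset A → (A → Finset 𝒳) → ℝ := fun B S => if S = Sprof B then 1 else 0
    refine ⟨μ, lam, ?_, ?_, ?_⟩
    · -- IsDistr μ
      constructor
      · intro t; by_cases h : t = e <;> simp [μ, h]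
      · rw [Fintype.sum_eq_single e (by intro t ht; simp [μ, ht])]
        simp [μ]
    · -- IsCompDistr
      intro B hB
      refine ⟨⟨?_, ?_⟩, ?_⟩
      · intro S; by_cases h : S = Sprof B <;> simp [lam, h]
      · rw [Fintype.sum_eq_single (Sprof B) (by intro S hS; simp [lam, hS])]
        simp [lam]
      · intro S hS a
        have hSe : S = Sprof B := by
          by_contra hc
          exact hS (by simp [lam, hc])
        subst hSe
        by_cases ha : a = a0
        · subst ha
          simp only [Sprof, if_pos rfl]
          by_cases hBE : B ∈ E
          · simp only [if_pos hBE]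
            exact ⟨Finset.singleton_subset_iff.mpr (Finset.mem_insert_of_mem
              (Finset.mem_singleton_self _)), Finset.singleton_nonempty _⟩
          · simp only [if_neg hBE]
            exact ⟨Finset.singleton_subset_iff.mpr (Finset.mem_insert_self _ _),
              Finset.singleton_nonempty _⟩
        · simp only [Sprof, if_neg ha]
          exact ⟨Finset.Subset.refl _, Finset.singleton_nonempty _⟩
    · -- the rationalization identity
      intro B hB a haB
      have ha0B : a0 ∈ B := ha0 B hB
      have hBne : B.Nonempty := ⟨a0, ha0B⟩
      -- collapse the sum over S
      have hsum : ∀ c : (A → Finset 𝒳) → ℝ,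
          (∑ S : A → Finset 𝒳, lam B S * c S) = c (Sprof B) := by
        intro c
        rw [Fintype.sum_eq_single (Sprof B)
          (by intro S hS; simp [lam, hS])]
        simp [lam]
      rw [hsum]
      -- collapse probOf
      have hprob : ∀ P : Ranking 𝒳 → Prop,
          probOf μ P = if P e then 1 else 0 := by
        intro P
        unfold probOf
        rw [Fintype.sum_eq_single e (by
          intro t ht
          by_cases h : P t <;> simp [μ, h, ht])]
        by_cases h : P e <;> simp [μ, h]
      rw [hprob]
      by_cases hBE : B ∈ E
      · -- menu in E : choose the r-best element
        have hScond : ∀ b : A, Sprof B b = {x b} := by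
          intro b
          by_cases hb : b = a0
          · subst hb; simp [Sprof, hBE]
          · simp [Sprof, hb]
        have hcond : (∃ x' ∈ Sprof B a, ∀ b ∈ B, b ≠ a → ∀ y ∈ Sprof B b,
            Ranking.pref e x' y) ↔ (a = Ranking.best r B hBne) := by
          rw [best_iff_aux r B hBne a haB]
          constructor
          · rintro ⟨x', hx', h⟩ b hb hba
            rw [hScond a, Finset.mem_singleton] at hx'
            subst hx'
            have := h b hb hba (x b) (by rw [hScond b]; exact Finset.mem_singleton_self _)
            exact (hprefxx a b).mp this
          · intro h
            refine ⟨x a, by rw [hScond a]; exact Finset.mem_singleton_self _, ?_⟩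
            intro b hb hba y hy
            rw [hScond b, Finset.mem_singleton] at hy
            subst hy
            exact (hprefxx a b).mpr (h b hb hba)
        have hvert : vertexSCF a0 r E B a = if a = Ranking.best r B hBne then 1 else 0 := by
          unfold vertexSCF
          rw [dif_pos hBne, if_pos (Or.inr hBE)]
        rw [hvert]
        by_cases h : a = Ranking.best r B hBne
        · rw [if_pos h, if_pos (hcond.mpr h)]
        · rw [if_neg h, if_neg (fun hc => h (hcond.mp hc))]
      · -- menu not in E : choose the outside option
        have hvert : vertexSCF a0 r E B a = if a = a0 then 1 else 0 := by
          unfold vertexSCF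
          rw [dif_pos hBne, if_neg (by push_neg; exact ⟨ha0B, hBE⟩)]
        rw [hvert]
        by_cases ha : a = a0
        · rw [if_pos ha, if_pos]
          refine ⟨xp, by simp [Sprof, ha, hBE], ?_⟩
          intro b hb hba y hy
          have hbne : b ≠ a0 := fun hc => hba (hc.trans ha.symm)
          simp only [Sprof, if_neg hbne, Finset.mem_singleton] at hy
          subst hy
          exact hprefxp b
        · rw [if_neg ha, if_neg]
          rintro ⟨x', hx', h⟩
          simp only [Sprof, if_neg ha, Finset.mem_singleton] at hx'
          subst hx'
          have := h a0 ha0B (fun hc => ha hc.symm) xp (by simp [Sprof, hBE])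
          exact hnotpref a this
end
end

section
/- Assume the outside option setup (𝒜_N = {a₀}), the full domain 𝒟 = 2^𝒜 ∖ {∅}, and that 𝒳 has at least 2|𝒜_A| + 1 elements. For every integer n with 2 ≤ n < |𝒜_A| + 1: (i) ρ^≻_𝓔 ∈ RU(n) for every linear order ≻ on 𝒜 and every collection 𝓔 ⊆ 𝒟 (deterministic menu-effect behavior is rationalizable); and (ii) RU(n) is not a convex set. -/
open Finset

noncomputable section

-- ### basic ranking lemmas

namespace Ranking

variable {T : Type} [Fintype T] (r : Ranking T)

lemma pref_trans {x y z : T} (h1 : r.pref x y) (h2 : r.pref y z) : r.pref x z :=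
  lt_trans h1 h2

lemma pref_irrefl (x : T) : ¬ r.pref x x := lt_irrefl _

lemma pref_asymm {x y : T} (h : r.pref x y) : ¬ r.pref y x := fun h' => lt_irrefl _ (lt_trans h h')

lemma pref_total {x y : T} (h : x ≠ y) : r.pref x y ∨ r.pref y x := by
  rcases lt_or_gt_of_ne (fun he : r x = r y => h (r.injective he)) with h' | h'
  · exact Or.inl h'
  · exact Or.inr h'

variable [DecidableEq T]

lemma best_mem (D : Finset T) (hD : D.Nonempty) : r.best D hD ∈ D := by
  have h := Finset.min'_mem (D.image fun x => r x) (hD.image fun x => r x)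
  rcases Finset.mem_image.mp h with ⟨b, hb, he⟩
  have : r.best D hD = b := by
    rw [Ranking.best, ← he, Equiv.symm_apply_apply]
  rwa [this]

lemma pref_best {D : Finset T} {hD : D.Nonempty} {b : T} (hb : b ∈ D)
    (hne : b ≠ r.best D hD) : r.pref (r.best D hD) b := by
  have hle : (D.image fun x => r x).min' (hD.image fun x => r x) ≤ r b :=
    Finset.min'_le _ _ (Finset.mem_image_of_mem _ hb)
  have heq : r (r.best D hD) = (D.image fun x => r x).min' (hD.image fun x => r x) := by
    rw [Ranking.best, Equiv.apply_symm_apply]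
  rw [Ranking.pref, heq]
  rcases lt_or_eq_of_le hle with h | h
  · exact h
  · exfalso; apply hne
    have : r b = r (r.best D hD) := by rw [heq, h]
    exact r.injective this

lemma best_eq_of {D : Finset T} {hD : D.Nonempty} {c : T} (hc : c ∈ D)
    (h : ∀ b ∈ D, b ≠ c → r.pref c b) : r.best D hD = c := by
  by_contra hne
  have h1 := r.pref_best hc (fun he => hne he.symm)
  have h2 := h _ (r.best_mem D hD) (fun he => hne he)
  exact r.pref_asymm h1 h2

end Ranking

-- ranking from injective priority
def rankingOfPriority {T : Type} [Fintype T] [DecidableEq T] (p : T → ℕ)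
    (hp : Function.Injective p) : Ranking T :=
  letI : LinearOrder T := LinearOrder.lift' p hp
  (monoEquivOfFin T rfl).symm.toEquiv

lemma pref_rankingOfPriority {T : Type} [Fintype T] [DecidableEq T] (p : T → ℕ)
    (hp : Function.Injective p) (x y : T) :
    (rankingOfPriority p hp).pref x y ↔ p x < p y := by
  letI : LinearOrder T := LinearOrder.lift' p hp
  have h : ∀ a b : T, a < b ↔ p a < p b := fun a b => Iff.rfl
  show (monoEquivOfFin T rfl).symm x < (monoEquivOfFin T rfl).symm y ↔ p x < p y
  rw [← h]
  exact (monoEquivOfFin T rfl).symm.lt_iff_lt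


section ProbLemmas
open Classical
variable {T : Type} [Fintype T] (μ : T → ℝ)

lemma probOf_nonneg (hμ : ∀ t, 0 ≤ μ t) (P : T → Prop) : 0 ≤ probOf μ P := by
  apply Finset.sum_nonneg
  intro t _
  by_cases h : P t <;> simp [probOf, h, hμ t]

lemma probOf_mono (hμ : ∀ t, 0 ≤ μ t) {P Q : T → Prop} (h : ∀ t, P t → Q t) :
    probOf μ P ≤ probOf μ Q := by
  apply Finset.sum_le_sum
  intro t _
  by_cases hp : P t
  · simp [hp, h t hp]
  · simp [hp]
    by_cases hq : Q t <;> simp [hq, hμ t]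

lemma probOf_eq_zero_iff (hμ : ∀ t, 0 ≤ μ t) (P : T → Prop) :
    probOf μ P = 0 ↔ ∀ t, μ t ≠ 0 → ¬ P t := by
  constructor
  · intro h0 t ht hP
    have hz := (Finset.sum_eq_zero_iff_of_nonneg (by
      intro x _
      by_cases h : P x <;> simp [h, hμ x])).mp h0 t (Finset.mem_univ t)
    rw [if_pos hP] at hz
    exact ht hz
  · intro h
    apply Finset.sum_eq_zero
    intro t _
    by_cases hP : P t
    · rw [if_pos hP]
      by_contra hz
      exact h t hz hP
    · rw [if_neg hP]

lemma probOf_pos_exists (hμ : ∀ t, 0 ≤ μ t) {P : T → Prop} (h : probOf μ P ≠ 0) :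
    ∃ t, μ t ≠ 0 ∧ P t := by
  by_contra hc
  push_neg at hc
  apply h
  apply (probOf_eq_zero_iff μ hμ P).mpr
  intro t ht hP
  exact (hc t ht) hP

lemma probOf_congr {P Q : T → Prop} (h : ∀ t, μ t ≠ 0 → (P t ↔ Q t)) :
    probOf μ P = probOf μ Q := by
  apply Finset.sum_congr rfl
  intro t _
  by_cases hz : μ t = 0
  · by_cases hp : P t <;> by_cases hq : Q t <;> simp [hp, hq, hz]
  · rw [show P t ↔ Q t from h t hz] 

lemma probOf_split (P Q : T → Prop) :
    probOf μ P = probOf μ (fun t => P t ∧ Q t) + probOf μ (fun t => P t ∧ ¬ Q t) := by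
  rw [probOf, probOf, probOf, ← Finset.sum_add_distrib]
  apply Finset.sum_congr rfl
  intro t _
  by_cases hp : P t <;> by_cases hq : Q t <;> simp [hp, hq]

lemma probOf_true (hμ : (∑ t, μ t) = 1) : probOf μ (fun _ => True) = 1 := by
  simpa [probOf] using hμ

lemma probOf_compl (hμ : (∑ t, μ t) = 1) (P : T → Prop) :
    probOf μ (fun t => ¬ P t) = 1 - probOf μ P := by
  have h := probOf_split μ (fun _ => True) P
  rw [probOf_true μ hμ] at h
  have h1 : probOf μ (fun t => True ∧ P t) = probOf μ P := by
    apply Finset.sum_congr rfl; intro t _; simp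
  have h2 : probOf μ (fun t => True ∧ ¬ P t) = probOf μ (fun t => ¬ P t) := by
    apply Finset.sum_congr rfl; intro t _; simp
  rw [h1, h2] at h
  linarith

-- if P ⊆ Q (on support) and probOf P = probOf Q then support ∩ Q ⊆ P
lemma probOf_eq_imp (hμ : ∀ t, 0 ≤ μ t) {P Q : T → Prop}
    (hPQ : ∀ t, P t → Q t) (heq : probOf μ P = probOf μ Q) :
    ∀ t, μ t ≠ 0 → Q t → P t := by
  have hs := probOf_split μ Q P
  have h1 : probOf μ (fun t => Q t ∧ P t) = probOf μ P := by
    apply probOf_congr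
    intro t _
    exact ⟨fun h => h.2, fun h => ⟨hPQ t h, h⟩⟩
  rw [h1, ← heq] at hs
  have h0 : probOf μ (fun t => Q t ∧ ¬ P t) = 0 := by linarith
  intro t ht hQ
  by_contra hP
  exact (probOf_eq_zero_iff μ hμ _).mp h0 t ht ⟨hQ, hP⟩

end ProbLemmas

section SumLemmas
variable {S : Type} [Fintype S] (lam : S → ℝ)

/-- if `g` is constantly `v` on the support of the distribution `lam`, the mixture is `v`. -/
lemma sum_mul_const_support (hnn : ∀ s, 0 ≤ lam s) (hsum : (∑ s, lam s) = 1)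
    {g : S → ℝ} {v : ℝ} (h : ∀ s, lam s ≠ 0 → g s = v) :
    (∑ s, lam s * g s) = v := by
  have : (∑ s, lam s * g s) = ∑ s, lam s * v := by
    apply Finset.sum_congr rfl
    intro s _
    by_cases hz : lam s = 0
    · simp [hz]
    · rw [h s hz]
  rw [this, ← Finset.sum_mul, hsum, one_mul]

/-- if each `g s ≤ v` on support and the mixture equals `v`, then `g = v` on support. -/
lemma sum_mul_eq_max (hnn : ∀ s, 0 ≤ lam s) (hsum : (∑ s, lam s) = 1)
    {g : S → ℝ} {v : ℝ} (hle : ∀ s, lam s ≠ 0 → g s ≤ v)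
    (h : (∑ s, lam s * g s) = v) : ∀ s, lam s ≠ 0 → g s = v := by
  have hv : (∑ s, lam s * v) = v := by rw [← Finset.sum_mul, hsum, one_mul]
  have hz : (∑ s, lam s * (v - g s)) = 0 := by
    have : (∑ s, lam s * (v - g s)) = (∑ s, lam s * v) - ∑ s, lam s * g s := by
      rw [← Finset.sum_sub_distrib]
      apply Finset.sum_congr rfl
      intro s _; ring
    rw [this, hv, h, sub_self]
  intro s hs
  have hnn' : ∀ x ∈ Finset.univ, 0 ≤ lam x * (v - g x) := by
    intro x _
    by_cases hx : lam x = 0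
    · simp [hx]
    · exact mul_nonneg (hnn x) (by linarith [hle x hx])
  have := (Finset.sum_eq_zero_iff_of_nonneg hnn').mp hz s (Finset.mem_univ s)
  rcases mul_eq_zero.mp this with h' | h'
  · exact absurd h' hs
  · linarith

/-- if each `g s ≥ 0` on support and the mixture is `0`, then `g = 0` on support. -/
lemma sum_mul_eq_zero (hnn : ∀ s, 0 ≤ lam s)
    {g : S → ℝ} (hge : ∀ s, lam s ≠ 0 → 0 ≤ g s)
    (h : (∑ s, lam s * g s) = 0) : ∀ s, lam s ≠ 0 → g s = 0 := by
  intro s hs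
  have hnn' : ∀ x ∈ Finset.univ, 0 ≤ lam x * g x := by
    intro x _
    by_cases hx : lam x = 0
    · simp [hx]
    · exact mul_nonneg (hnn x) (hge x hx)
  have := (Finset.sum_eq_zero_iff_of_nonneg hnn').mp h s (Finset.mem_univ s)
  rcases mul_eq_zero.mp this with h' | h'
  · exact absurd h' hs
  · exact h'

end SumLemmas

-- ### vertexSCF utilities

lemma mem_fullDomain {A : Type} [Fintype A] [DecidableEq A] (B : Finset A) :
    B ∈ fullDomain A ↔ B.Nonempty := by
  simp [fullDomain]

def vertexChoice {A : Type} [Fintype A] [DecidableEq A]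
    (a0 : A) (r : Ranking A) (E : Finset (Finset A)) (B : Finset A) : A :=
  if hB : B.Nonempty then
    (if a0 ∉ B ∨ B ∈ E then Ranking.best r B hB else a0)
  else a0

lemma vertexSCF_eq {A : Type} [Fintype A] [DecidableEq A]
    (a0 : A) (r : Ranking A) (E : Finset (Finset A)) {B : Finset A} (hB : B.Nonempty)
    (c : A) : vertexSCF a0 r E B c = if c = vertexChoice a0 r E B then 1 else 0 := by
  rw [vertexSCF, vertexChoice, dif_pos hB, dif_pos hB]
  by_cases h : a0 ∉ B ∨ B ∈ E
  · rw [if_pos h, if_pos h]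
  · rw [if_neg h, if_neg h]

lemma vertexChoice_mem {A : Type} [Fintype A] [DecidableEq A]
    (a0 : A) (r : Ranking A) (E : Finset (Finset A)) {B : Finset A} (hB : B.Nonempty) :
    vertexChoice a0 r E B ∈ B := by
  rw [vertexChoice, dif_pos hB]
  by_cases h : a0 ∉ B ∨ B ∈ E
  · rw [if_pos h]; exact r.best_mem B hB
  · rw [if_neg h]
    push_neg at h
    exact h.1

lemma vertexChoice_of_mem_notE {A : Type} [Fintype A] [DecidableEq A]
    (a0 : A) (r : Ranking A) (E : Finset (Finset A)) {B : Finset A} (hB : B.Nonempty)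
    (h1 : a0 ∈ B) (h2 : B ∉ E) : vertexChoice a0 r E B = a0 := by
  rw [vertexChoice, dif_pos hB, if_neg]
  push_neg
  exact ⟨h1, h2⟩

lemma vertexChoice_of_best {A : Type} [Fintype A] [DecidableEq A]
    (a0 : A) (r : Ranking A) (E : Finset (Finset A)) {B : Finset A} (hB : B.Nonempty)
    (h : a0 ∉ B ∨ B ∈ E) : vertexChoice a0 r E B = Ranking.best r B hB := by
  rw [vertexChoice, dif_pos hB, if_pos h]

lemma isSCF_vertexSCF {A : Type} [Fintype A] [DecidableEq A]
    (a0 : A) (r : Ranking A) (E : Finset (Finset A)) :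
    IsSCF (fullDomain A) (vertexSCF a0 r E) := by
  intro B hB
  rw [mem_fullDomain] at hB
  refine ⟨?_, ?_, ?_⟩
  · intro a _
    rw [vertexSCF_eq a0 r E hB]
    by_cases h : a = vertexChoice a0 r E B <;> simp [h]
  · have : (∑ a ∈ B, vertexSCF a0 r E B a)
        = ∑ a ∈ B, if a = vertexChoice a0 r E B then (1:ℝ) else 0 := by
      apply Finset.sum_congr rfl
      intro a _
      exact vertexSCF_eq a0 r E hB a
    rw [this, Finset.sum_ite_eq' B (vertexChoice a0 r E B) (fun _ => (1:ℝ)),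
      if_pos (vertexChoice_mem a0 r E hB)]
  · intro a ha
    rw [vertexSCF_eq a0 r E hB, if_neg]
    intro he
    exact ha (he ▸ vertexChoice_mem a0 r E hB)

-- ### point mass lemmas

lemma isDistr_pointmass {T : Type} [Fintype T] [DecidableEq T] (t0 : T) :
    IsDistr (fun t => if t = t0 then (1:ℝ) else 0) := by
  constructor
  · intro t; by_cases h : t = t0 <;> simp [h]
  · rw [Finset.sum_ite_eq' Finset.univ t0 (fun _ => (1:ℝ)), if_pos (Finset.mem_univ t0)]

open Classical in
lemma probOf_pointmass {T : Type} [Fintype T] [DecidableEq T] (t0 : T) (P : T → Prop) :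
    probOf (fun t => if t = t0 then (1:ℝ) else 0) P = if P t0 then 1 else 0 := by
  rw [probOf]
  have : ∀ t ∈ Finset.univ, (if P t then (if t = t0 then (1:ℝ) else 0) else 0)
      = if t = t0 then (if P t0 then 1 else 0) else 0 := by
    intro t _
    by_cases h : t = t0
    · subst h; by_cases hP : P t <;> simp [hP]
    · by_cases hP : P t <;> simp [h, hP]
  rw [Finset.sum_congr rfl this, Finset.sum_ite_eq' Finset.univ t0, if_pos (Finset.mem_univ t0)]

lemma sum_pointmass_mul {T : Type} [Fintype T] [DecidableEq T] (t0 : T) (g : T → ℝ) :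
    (∑ t, (if t = t0 then (1:ℝ) else 0) * g t) = g t0 := by
  have : ∀ t ∈ Finset.univ, (if t = t0 then (1:ℝ) else 0) * g t
      = if t = t0 then g t0 else 0 := by
    intro t _
    by_cases h : t = t0
    · subst h; simp
    · simp [h]
  rw [Finset.sum_congr rfl this, Finset.sum_ite_eq' Finset.univ t0, if_pos (Finset.mem_univ t0)]

-- ### indexed elements of 𝒳

noncomputable def idxElt (𝒳 : Type) [Fintype 𝒳] [Nonempty 𝒳] (i : ℕ) : 𝒳 :=
  (Fintype.equivFin 𝒳).symm ⟨i % Fintype.card 𝒳, Nat.mod_lt _ Fintype.card_pos⟩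

lemma idxElt_val {𝒳 : Type} [Fintype 𝒳] [Nonempty 𝒳] {i : ℕ} (hi : i < Fintype.card 𝒳) :
    ((Fintype.equivFin 𝒳) (idxElt 𝒳 i)).val = i := by
  rw [idxElt, Equiv.apply_symm_apply]
  exact Nat.mod_eq_of_lt hi

lemma idxElt_inj {𝒳 : Type} [Fintype 𝒳] [Nonempty 𝒳] {i j : ℕ}
    (hi : i < Fintype.card 𝒳) (hj : j < Fintype.card 𝒳)
    (h : idxElt 𝒳 i = idxElt 𝒳 j) : i = j := by
  have := congrArg (fun x => ((Fintype.equivFin 𝒳) x).val) h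
  simpa [idxElt_val hi, idxElt_val hj] using this

lemma pref_equivFin {𝒳 : Type} [Fintype 𝒳] (x y : 𝒳) :
    Ranking.pref (Fintype.equivFin 𝒳) x y ↔
      ((Fintype.equivFin 𝒳) x).val < ((Fintype.equivFin 𝒳) y).val := by
  rw [Ranking.pref, Fin.lt_def]

-- ### the construction for part (i)

noncomputable def consX {A : Type} (𝒳 : Type) [Fintype A] [DecidableEq A] [Fintype 𝒳]
    [DecidableEq 𝒳] [Nonempty 𝒳] (a0 : A) (r : Ranking A) (n m : ℕ) : A → Finset 𝒳 := fun a =>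
  if a = a0 then
    insert (idxElt 𝒳 0) ((Finset.range (n-1)).image (fun k => idxElt 𝒳 (m+2+k)))
  else {idxElt 𝒳 ((r a).val + 1)}

noncomputable def consS {A : Type} (𝒳 : Type) [Fintype A] [DecidableEq A] [Fintype 𝒳]
    [Nonempty 𝒳] (a0 : A) (r : Ranking A) (E : Finset (Finset A)) (n m : ℕ) :
    Finset A → (A → Finset 𝒳) := fun B a =>
  if a = a0 then
    (if vertexChoice a0 r E B = a0 then {idxElt 𝒳 0} else {idxElt 𝒳 (m+2)})
  else {idxElt 𝒳 ((r a).val + 1)}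

section PartI

variable {A 𝒳 : Type} [Fintype A] [DecidableEq A] [Fintype 𝒳] [DecidableEq 𝒳] [Nonempty 𝒳]
  {a0 : A} {r : Ranking A} {E : Finset (Finset A)} {n m : ℕ}

lemma consS_atom (B : Finset A) {b : A} (hb : b ≠ a0) :
    consS 𝒳 a0 r E n m B b = {idxElt 𝒳 ((r b).val + 1)} := by
  rw [consS, if_neg hb]

lemma consS_a0 (B : Finset A) :
    consS 𝒳 a0 r E n m B a0 =
      (if vertexChoice a0 r E B = a0 then {idxElt 𝒳 0} else {idxElt 𝒳 (m+2)}) := by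
  rw [consS, if_pos rfl]

lemma mem_consX_a0 {u : 𝒳} :
    u ∈ consX 𝒳 a0 r n m a0 ↔ u = idxElt 𝒳 0 ∨ ∃ k < n-1, u = idxElt 𝒳 (m+2+k) := by
  rw [consX, if_pos rfl]
  simp only [Finset.mem_insert, Finset.mem_image, Finset.mem_range]
  constructor
  · rintro (h | ⟨k, hk, he⟩)
    · exact Or.inl h
    · exact Or.inr ⟨k, hk, he.symm⟩
  · rintro (h | ⟨k, hk, he⟩)
    · exact Or.inl h
    · exact Or.inr ⟨k, hk, he.symm⟩

lemma consX_atom {a : A} (ha : a ≠ a0) :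
    consX 𝒳 a0 r n m a = {idxElt 𝒳 ((r a).val + 1)} := by
  rw [consX, if_neg ha]

variable (hmn : m + n < Fintype.card 𝒳) (h2 : 2 ≤ n) (hnm : n ≤ m)
  (hram : ∀ a : A, (r a).val < m + 1)

include hmn h2 hnm in
lemma card_consX_a0 : (consX 𝒳 a0 r n m a0).card = n := by
  rw [consX, if_pos rfl]
  rw [Finset.card_insert_of_notMem, Finset.card_image_of_injOn, Finset.card_range]
  · omega
  · intro k hk k' hk' he
    rw [Finset.mem_coe, Finset.mem_range] at hk hk'
    have h1 : m + 2 + k < Fintype.card 𝒳 := by omega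
    have h2 : m + 2 + k' < Fintype.card 𝒳 := by omega
    have := idxElt_inj h1 h2 he
    omega
  · intro hmem
    rcases Finset.mem_image.mp hmem with ⟨k, hk, he⟩
    rw [Finset.mem_range] at hk
    have h1 : m + 2 + k < Fintype.card 𝒳 := by omega
    have := idxElt_inj h1 (by omega : 0 < Fintype.card 𝒳) he
    omega

include hmn h2 hnm in
lemma val_mem_consX_a0 {u : 𝒳} (hu : u ∈ consX 𝒳 a0 r n m a0) :
    ((Fintype.equivFin 𝒳) u).val = 0 ∨
      (m + 2 ≤ ((Fintype.equivFin 𝒳) u).val ∧ ((Fintype.equivFin 𝒳) u).val ≤ m + n) := by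
  rcases mem_consX_a0.mp hu with h | ⟨k, hk, h⟩
  · left; rw [h, idxElt_val (by omega)]
  · right; rw [h, idxElt_val (by omega)]; omega

include hmn h2 hnm hram in
lemma consX_disj : ∀ a b : A, a ≠ b → Disjoint (consX 𝒳 a0 r n m a) (consX 𝒳 a0 r n m b) := by
  have key : ∀ a b : A, a ≠ b → b ≠ a0 → ∀ u ∈ consX 𝒳 a0 r n m a,
      u ∉ consX 𝒳 a0 r n m b := by
    intro a b hab hb u hu hub
    rw [consX_atom hb, Finset.mem_singleton] at hub
    have hvb : ((Fintype.equivFin 𝒳) u).val = (r b).val + 1 := by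
      rw [hub, idxElt_val (by have := hram b; omega)]
    by_cases ha : a = a0
    · subst ha
      rcases val_mem_consX_a0 hmn h2 hnm hu with h | h
      · omega
      · have := hram b; omega
    · rw [consX_atom ha, Finset.mem_singleton] at hu
      have hva : ((Fintype.equivFin 𝒳) u).val = (r a).val + 1 := by
        rw [hu, idxElt_val (by have := hram a; omega)]
      have : r a = r b := by
        apply Fin.ext; omega
      exact hab (r.injective this)
  intro a b hab
  rw [Finset.disjoint_left]
  intro u hu hub
  by_cases hb : b = a0
  · have ha : a ≠ a0 := fun h => hab (h.trans hb.symm)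
    exact key b a (fun h => hab h.symm) ha u hub hu
  · exact key a b hab hb u hu hub

end PartI

section PartI2

variable {A 𝒳 : Type} [Fintype A] [DecidableEq A] [Fintype 𝒳] [DecidableEq 𝒳] [Nonempty 𝒳]
  {a0 : A} {r : Ranking A} {E : Finset (Finset A)} {n m : ℕ}

variable (hmn : m + n < Fintype.card 𝒳) (h2 : 2 ≤ n) (hnm : n ≤ m)
  (hram : ∀ a : A, (r a).val < m + 1)

include hmn h2 hnm hram in
lemma event_iff_choice {B : Finset A} (hB : B.Nonempty) {c : A} (hc : c ∈ B) :
    (∃ x ∈ consS 𝒳 a0 r E n m B c, ∀ b ∈ B, b ≠ c → ∀ y ∈ consS 𝒳 a0 r E n m B b,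
        Ranking.pref (Fintype.equivFin 𝒳) x y)
      ↔ c = vertexChoice a0 r E B := by
  have hvatom : ∀ a : A, a ≠ a0 →
      ((Fintype.equivFin 𝒳) (idxElt 𝒳 ((r a).val + 1))).val = (r a).val + 1 := by
    intro a _
    exact idxElt_val (by have := hram a; omega)
  have hv0 : ((Fintype.equivFin 𝒳) (idxElt 𝒳 0)).val = 0 := idxElt_val (by omega)
  have hvbot : ((Fintype.equivFin 𝒳) (idxElt 𝒳 (m+2))).val = m + 2 := idxElt_val (by omega)
  constructor
  · rintro ⟨x, hx, hbeat⟩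
    by_contra hne
    have hchmem := vertexChoice_mem a0 r E hB
    have hbc := hbeat (vertexChoice a0 r E B) hchmem (fun h => hne h.symm)
    by_cases hch0 : vertexChoice a0 r E B = a0
    · -- the choice is a0, whose composition is the top element; nothing beats it
      have h0mem : idxElt 𝒳 0 ∈ consS 𝒳 a0 r E n m B (vertexChoice a0 r E B) := by
        rw [hch0, consS_a0, if_pos hch0]
        exact Finset.mem_singleton_self _
      have := hbc _ h0mem
      rw [pref_equivFin, hv0] at this
      omega
    · -- the choice is the best atom b*
      have hbmem : idxElt 𝒳 ((r (vertexChoice a0 r E B)).val + 1)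
          ∈ consS 𝒳 a0 r E n m B (vertexChoice a0 r E B) := by
        rw [consS_atom _ hch0]
        exact Finset.mem_singleton_self _
      have hlt := hbc _ hbmem
      rw [pref_equivFin, hvatom _ hch0] at hlt
      -- now analyze x's value
      by_cases hca0 : c = a0
      · have hx' : x = idxElt 𝒳 (m+2) := by
          rw [hca0, consS_a0, if_neg hch0, Finset.mem_singleton] at hx
          exact hx
        rw [hx', hvbot] at hlt
        have := hram (vertexChoice a0 r E B)
        omega
      · have hx' : x = idxElt 𝒳 ((r c).val + 1) := by
          rw [consS_atom _ hca0, Finset.mem_singleton] at hx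
          exact hx
        rw [hx', hvatom _ hca0] at hlt
        -- so r c < r (best), but best is strictly preferred: contradiction
        have hbr : a0 ∉ B ∨ B ∈ E := by
          by_contra hbr
          exact hch0 (by
            push_neg at hbr
            exact vertexChoice_of_mem_notE a0 r E hB hbr.1 hbr.2)
        have hbest : vertexChoice a0 r E B = Ranking.best r B hB :=
          vertexChoice_of_best a0 r E hB hbr
        have hpb : r.pref (Ranking.best r B hB) c := by
          apply r.pref_best hc
          intro h
          exact hne (h ▸ hbest.symm)
        rw [Ranking.pref, Fin.lt_def, ← hbest] at hpb
        omega
  · intro hceq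
    by_cases hch0 : vertexChoice a0 r E B = a0
    · -- c = a0, witness: top element
      refine ⟨idxElt 𝒳 0, ?_, ?_⟩
      · rw [hceq, hch0, consS_a0, if_pos hch0]
        exact Finset.mem_singleton_self _
      · intro b hb hbne y hy
        have hba0 : b ≠ a0 := by
          rw [hceq, hch0] at hbne
          exact hbne
        rw [consS_atom _ hba0, Finset.mem_singleton] at hy
        rw [hy, pref_equivFin, hv0, hvatom _ hba0]
        omega
    · -- c = best, witness: its own element
      have hca0 : c ≠ a0 := fun h => hch0 (by rw [← hceq, ← h])
      refine ⟨idxElt 𝒳 ((r c).val + 1), ?_, ?_⟩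
      · rw [consS_atom _ hca0]
        exact Finset.mem_singleton_self _
      · intro b hb hbne y hy
        by_cases hba0 : b = a0
        · rw [hba0, consS_a0, if_neg hch0, Finset.mem_singleton] at hy
          rw [hy, pref_equivFin, hvatom _ hca0, hvbot]
          have := hram c
          omega
        · rw [consS_atom _ hba0, Finset.mem_singleton] at hy
          rw [hy, pref_equivFin, hvatom _ hca0, hvatom _ hba0]
          have hbr : a0 ∉ B ∨ B ∈ E := by
            by_contra hbr
            exact hch0 (by
              push_neg at hbr
              exact vertexChoice_of_mem_notE a0 r E hB hbr.1 hbr.2)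
          have hbest : vertexChoice a0 r E B = Ranking.best r B hB :=
            vertexChoice_of_best a0 r E hB hbr
          have hpb : r.pref c b := by
            rw [hceq, hbest]
            apply r.pref_best hb
            intro h
            apply hbne
            rw [h, ← hbest, ← hceq]
          rw [Ranking.pref, Fin.lt_def] at hpb
          omega

end PartI2

-- ### Part (i)

lemma partI {A 𝒳 : Type} [Fintype A] [DecidableEq A] [Fintype 𝒳] [DecidableEq 𝒳]
    (a0 : A) (hX : 2 * ({a0}ᶜ : Finset A).card + 1 ≤ Fintype.card 𝒳)
    (n : ℕ) (h2 : 2 ≤ n) (hn : n < ({a0}ᶜ : Finset A).card + 1)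
    (r : Ranking A) (E : Finset (Finset A)) :
    RUn 𝒳 a0 (fullDomain A) n (vertexSCF a0 r E) := by
  have hNpos : 0 < Fintype.card 𝒳 := by omega
  haveI : Nonempty 𝒳 := Fintype.card_pos_iff.mp hNpos
  set m := ({a0}ᶜ : Finset A).card with hm
  have hnm : n ≤ m := by omega
  have hmn : m + n < Fintype.card 𝒳 := by omega
  have hcardA : Fintype.card A = m + 1 := by
    have h1 : ({a0}ᶜ : Finset A).card = Fintype.card A - ({a0} : Finset A).card :=
      Finset.card_compl _
    have h2 : ({a0} : Finset A).card = 1 := Finset.card_singleton _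
    have h3 : 0 < Fintype.card A := Fintype.card_pos_iff.mpr ⟨a0⟩
    omega
  have hram : ∀ a : A, (r a).val < m + 1 := by
    intro a
    have := (r a).isLt
    omega
  refine ⟨⟨consX 𝒳 a0 r n m, consX_disj hmn h2 hnm hram, ?_, ?_⟩, ?_, ?_⟩
  · -- atomic
    intro a ha
    rw [Finset.mem_singleton] at ha
    rw [consX_atom ha]
    exact Finset.card_singleton _
  · -- nonatomic
    intro a ha
    rw [Finset.mem_singleton] at ha
    rw [ha, card_consX_a0 hmn h2 hnm]
    exact h2
  · -- card of X a0 = n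
    exact card_consX_a0 hmn h2 hnm
  refine ⟨fun r' => if r' = Fintype.equivFin 𝒳 then (1:ℝ) else 0,
    fun B S => if S = consS 𝒳 a0 r E n m B then (1:ℝ) else 0, ?_, ?_, ?_⟩
  · exact isDistr_pointmass _
  · -- IsCompDistr
    intro B _
    refine ⟨isDistr_pointmass _, ?_⟩
    intro S hS a
    have hSe : S = consS 𝒳 a0 r E n m B := by
      by_contra h
      exact hS (by simp [h])
    rw [hSe]
    show consS 𝒳 a0 r E n m B a ⊆ consX 𝒳 a0 r n m a ∧ (consS 𝒳 a0 r E n m B a).Nonempty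
    by_cases ha : a = a0
    · rw [ha, consS_a0]
      constructor
      · by_cases hch : vertexChoice a0 r E B = a0
        · rw [if_pos hch]
          intro u hu
          rw [Finset.mem_singleton] at hu
          rw [hu]
          exact mem_consX_a0.mpr (Or.inl rfl)
        · rw [if_neg hch]
          intro u hu
          rw [Finset.mem_singleton] at hu
          rw [hu]
          apply mem_consX_a0.mpr
          right
          exact ⟨0, by omega, by rw [Nat.add_zero]⟩
      · by_cases hch : vertexChoice a0 r E B = a0
        · rw [if_pos hch]; exact Finset.singleton_nonempty _
        · rw [if_neg hch]; exact Finset.singleton_nonempty _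
    · rw [consS_atom _ ha, consX_atom ha]
      exact ⟨Finset.Subset.refl _, Finset.singleton_nonempty _⟩
  · -- the rationalization identity
    intro B hBd c hc
    have hB : B.Nonempty := (mem_fullDomain B).mp hBd
    rw [sum_pointmass_mul (consS 𝒳 a0 r E n m B)
      (fun S => probOf _ (fun rr => ∃ x ∈ S c, ∀ b ∈ B, b ≠ c → ∀ y ∈ S b,
        Ranking.pref rr x y)), probOf_pointmass, vertexSCF_eq a0 r E hB]
    by_cases hev : c = vertexChoice a0 r E B
    · rw [if_pos hev, if_pos ((event_iff_choice hmn h2 hnm hram hB hc).mpr hev)]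
    · rw [if_neg hev, if_neg (fun h => hev ((event_iff_choice hmn h2 hnm hram hB hc).mp h))]

-- ### part (ii) infrastructure

lemma exists_ne_zero_of_sum_one {S : Type} [Fintype S] {lam : S → ℝ}
    (h : (∑ s, lam s) = 1) : ∃ s, lam s ≠ 0 := by
  by_contra hc
  push_neg at hc
  rw [Finset.sum_congr rfl (fun s _ => hc s)] at h
  simp at h

section PartII

variable {A 𝒳 : Type} [Fintype A] [DecidableEq A] [Fintype 𝒳] [DecidableEq 𝒳]
  {a0 : A} {Xc : AggCorr A 𝒳 ({a0} : Finset A)} {xel : A → 𝒳}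

lemma singleton_X (hxel : ∀ b, b ≠ a0 → Xc.X b = {xel b}) {S : A → Finset 𝒳}
    (hS : ∀ a', S a' ⊆ Xc.X a' ∧ (S a').Nonempty) {b : A} (hb : b ≠ a0) :
    S b = {xel b} := by
  have h1 : S b ⊆ {xel b} := by
    rw [← hxel b hb]; exact (hS b).1
  exact ((hS b).2.subset_singleton_iff).mp h1

lemma xel_mem_X (hxel : ∀ b, b ≠ a0 → Xc.X b = {xel b}) {b : A} (hb : b ≠ a0) :
    xel b ∈ Xc.X b := by
  rw [hxel b hb]; exact Finset.mem_singleton_self _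

lemma xel_ne (hxel : ∀ b, b ≠ a0 → Xc.X b = {xel b}) {b c : A} (hb : b ≠ a0) (hc : c ≠ a0)
    (hbc : b ≠ c) : xel b ≠ xel c := by
  intro h
  have h1 := xel_mem_X hxel hb
  have h2 := xel_mem_X hxel hc
  rw [h] at h1
  exact (Finset.disjoint_left.mp (Xc.disj b c hbc)) h1 h2

lemma xel_ne_memX (hxel : ∀ b, b ≠ a0 → Xc.X b = {xel b}) {b : A} (hb : b ≠ a0)
    {u : 𝒳} (hu : u ∈ Xc.X a0) : u ≠ xel b := by
  intro h
  have h1 := xel_mem_X hxel hb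
  rw [← h] at h1
  exact (Finset.disjoint_left.mp (Xc.disj a0 b (fun he => hb he.symm))) hu h1

lemma eventS_iff_a0 (hxel : ∀ b, b ≠ a0 → Xc.X b = {xel b}) {S : A → Finset 𝒳}
    (hS : ∀ a', S a' ⊆ Xc.X a' ∧ (S a').Nonempty) {B : Finset A} {c : A} (hc : c ≠ a0)
    (rr : Ranking 𝒳) :
    (∃ x ∈ S c, ∀ b ∈ B, b ≠ c → ∀ y ∈ S b, Ranking.pref rr x y) ↔
      ((∀ b ∈ B, b ≠ c → b ≠ a0 → Ranking.pref rr (xel c) (xel b)) ∧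
        (a0 ∈ B → ∀ u ∈ S a0, Ranking.pref rr (xel c) u)) := by
  have hSc : S c = {xel c} := singleton_X hxel hS hc
  constructor
  · rintro ⟨x, hx, hbeat⟩
    rw [hSc, Finset.mem_singleton] at hx
    subst hx
    constructor
    · intro b hb hbc hb0
      have := hbeat b hb hbc (xel b)
      rw [singleton_X hxel hS hb0] at this
      exact this (Finset.mem_singleton_self _)
    · intro h0 u hu
      exact hbeat a0 h0 (fun he => hc he.symm) u hu
  · rintro ⟨h1, h2⟩
    refine ⟨xel c, by rw [hSc]; exact Finset.mem_singleton_self _, ?_⟩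
    intro b hb hbc y hy
    by_cases hb0 : b = a0
    · subst hb0
      exact h2 hb y hy
    · rw [singleton_X hxel hS hb0, Finset.mem_singleton] at hy
      rw [hy]
      exact h1 b hb hbc hb0

end PartII

-- ### priority functions for part (ii)

def prio {A : Type} [DecidableEq A] (a0 : A) (cardA : ℕ) (eA : A → ℕ) {n : ℕ} [NeZero n]
    (a : Fin n → A) (t : Fin n) : A → ℕ := fun b =>
  (if b = a t then 0 else if b = a 0 then 1 else if b = a0 then 3 else 2) * (cardA + 1) + eA b

section Prio

variable {A : Type} [DecidableEq A] {a0 : A} {cardA : ℕ} {eA : A → ℕ} {n : ℕ} [NeZero n]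
  {a : Fin n → A} (heA : Function.Injective eA) (heAlt : ∀ b, eA b < cardA)

include heA heAlt in
lemma prio_inj (t : Fin n) : Function.Injective (prio a0 cardA eA a t) := by
  intro x y h
  apply heA
  have hx := heAlt x
  have hy := heAlt y
  have e1 : prio a0 cardA eA a t x % (cardA + 1) = eA x := by
    unfold prio
    rw [mul_comm, Nat.mul_add_mod]
    exact Nat.mod_eq_of_lt (by omega)
  have e2 : prio a0 cardA eA a t y % (cardA + 1) = eA y := by
    unfold prio
    rw [mul_comm, Nat.mul_add_mod]
    exact Nat.mod_eq_of_lt (by omega)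
  rw [← e1, ← e2, h]

include heAlt in
lemma prio_top (t : Fin n) {b : A} (hb : b ≠ a t) :
    prio a0 cardA eA a t (a t) < prio a0 cardA eA a t b := by
  have h1 := heAlt (a t)
  have h2 := heAlt b
  unfold prio
  split_ifs <;> first | omega | simp_all

include heAlt in
lemma prio_second (t : Fin n) (h0t : a 0 ≠ a t) {b : A} (hbt : b ≠ a t) (hb0 : b ≠ a 0) :
    prio a0 cardA eA a t (a 0) < prio a0 cardA eA a t b := by
  have h1 := heAlt (a 0)
  have h2 := heAlt b
  unfold prio
  split_ifs <;> first | omega | simp_all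

include heAlt in
lemma prio_a0last (t : Fin n) (h1 : a0 ≠ a t) (h2 : a0 ≠ a 0) {b : A} (hb : b ≠ a0) :
    prio a0 cardA eA a t b < prio a0 cardA eA a t a0 := by
  have k1 := heAlt b
  have k2 := heAlt a0
  unfold prio
  split_ifs <;> first | omega | simp_all

end Prio

-- ### part (ii) core

lemma partII_core {A 𝒳 : Type} [Fintype A] [DecidableEq A] [Fintype 𝒳] [DecidableEq 𝒳]
    (a0 : A) (n : ℕ) [NeZero n] (h2 : 2 ≤ n)
    (aa : Fin n → A) (ha0 : ∀ i, aa i ≠ a0) (hainj : Function.Injective aa)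
    (o : Fin n → Ranking A)
    (hpref_top : ∀ t : Fin n, ∀ b, b ≠ aa t → (o t).pref (aa t) b)
    (hpref_second : ∀ t : Fin n, aa 0 ≠ aa t → ∀ b, b ≠ aa t → b ≠ aa 0 → (o t).pref (aa 0) b)
    (hpref_a0last : ∀ t : Fin n, ∀ b, b ≠ a0 → (o t).pref b a0)
    (E : Fin n → Finset (Finset A))
    (hE1 : ∀ t, insert a0 ({aa 0} : Finset A) ∉ E t)
    (hE2 : ∀ t j, j ≠ 0 → t ≠ j → insert a0 ({aa 0, aa j} : Finset A) ∈ E t)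
    (hE3 : ∀ j, j ≠ 0 → insert a0 ({aa 0, aa j} : Finset A) ∉ E j)
    (hE4 : ∀ t, insert a0 ({aa 1} : Finset A) ∈ E t)
    (hconv : Convex ℝ {ρ : Finset A → A → ℝ | IsSCF (fullDomain A) ρ ∧
        RUn 𝒳 a0 (fullDomain A) n ρ})
    (hRU : ∀ (r : Ranking A) (Ec : Finset (Finset A)),
      RUn 𝒳 a0 (fullDomain A) n (vertexSCF a0 r Ec)) : False := by
  have hn0 : (n:ℝ) ≠ 0 := by positivity
  have hinv0 : (n:ℝ)⁻¹ ≠ 0 := inv_ne_zero hn0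
  -- the mixture belongs to the set
  have hmem : (∑ t : Fin n, (n:ℝ)⁻¹ • vertexSCF a0 (o t) (E t)) ∈
      {ρ : Finset A → A → ℝ | IsSCF (fullDomain A) ρ ∧ RUn 𝒳 a0 (fullDomain A) n ρ} := by
    apply hconv.sum_mem
    · intro t _
      positivity
    · rw [Finset.sum_const, Finset.card_univ, Fintype.card_fin, nsmul_eq_mul,
        mul_inv_cancel₀ hn0]
    · intro t _
      exact ⟨isSCF_vertexSCF a0 (o t) (E t), hRU (o t) (E t)⟩
  obtain ⟨-, Xc, hcardX, μ, lam, ⟨hμ0, hμ1⟩, hcomp, hrat⟩ := hmem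
  -- the singleton elements
  have hXa0card : 2 ≤ (Xc.X a0).card := Xc.nonatomic a0 (Finset.mem_singleton_self a0)
  obtain ⟨v0, hv0⟩ := Finset.card_pos.mp (by omega : 0 < (Xc.X a0).card)
  have hsing : ∀ b : A, ∃ v : 𝒳, b ≠ a0 → Xc.X b = {v} := by
    intro b
    by_cases hb : b = a0
    · exact ⟨v0, fun h => absurd hb h⟩
    · obtain ⟨v, hv⟩ := Finset.card_eq_one.mp (Xc.atomic b (by
        rw [Finset.mem_singleton]; exact hb))
      exact ⟨v, fun _ => hv⟩
  choose xel hxel using hsing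
  -- F evaluation helper
  have hFeval : ∀ (B : Finset A), B.Nonempty → ∀ (c : A),
      (∑ t : Fin n, (n:ℝ)⁻¹ • vertexSCF a0 (o t) (E t)) B c
        = ∑ t : Fin n, (n:ℝ)⁻¹ * (if c = vertexChoice a0 (o t) (E t) B then 1 else 0) := by
    intro B hB c
    simp only [Finset.sum_apply, Pi.smul_apply, smul_eq_mul]
    apply Finset.sum_congr rfl
    intro t _
    rw [vertexSCF_eq a0 (o t) (E t) hB c]
  -- membership facts about atoms
  have haamem : ∀ i : Fin n, aa i ∈ ({a0}ᶜ : Finset A) := by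
    intro i
    rw [Finset.mem_compl, Finset.mem_singleton]
    exact ha0 i
  have hM1ne : ({a0}ᶜ : Finset A).Nonempty := ⟨aa 0, haamem 0⟩
  have hM1mem : ({a0}ᶜ : Finset A) ∈ fullDomain A := (mem_fullDomain _).mpr hM1ne
  -- distinctness of atoms' elements
  have hxelne : ∀ i j : Fin n, i ≠ j → xel (aa i) ≠ xel (aa j) := by
    intro i j hij
    exact xel_ne hxel (ha0 i) (ha0 j) (fun h => hij (hainj h))
  -- support facts for compositions
  have hsupp : ∀ (B : Finset A), B ∈ fullDomain A → ∀ S, lam B S ≠ 0 →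
      ∀ a', S a' ⊆ Xc.X a' ∧ (S a').Nonempty := by
    intro B hB S hS
    exact (hcomp B hB).2 S hS
  -- ## Step 1: probOf of the events E_t equals 1/n
  have hEt_val : ∀ i : Fin n,
      probOf μ (fun rr => ∀ b, b ≠ a0 → b ≠ aa i → Ranking.pref rr (xel (aa i)) (xel b))
        = (n:ℝ)⁻¹ := by
    intro i
    have hchoice : ∀ t : Fin n, vertexChoice a0 (o t) (E t) ({a0}ᶜ : Finset A) = aa t := by
      intro t
      rw [vertexChoice_of_best a0 (o t) (E t) hM1ne (Or.inl (by
        rw [Finset.mem_compl, Finset.mem_singleton]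
        exact fun h => h rfl))]
      apply Ranking.best_eq_of
      · exact haamem t
      · intro b _ hbne
        exact hpref_top t b hbne
    have hv : (∑ t : Fin n, (n:ℝ)⁻¹ • vertexSCF a0 (o t) (E t)) ({a0}ᶜ : Finset A) (aa i)
        = (n:ℝ)⁻¹ := by
      rw [hFeval _ hM1ne (aa i)]
      have : ∀ t ∈ Finset.univ, (n:ℝ)⁻¹ * (if aa i = vertexChoice a0 (o t) (E t)
          ({a0}ᶜ : Finset A) then (1:ℝ) else 0) = if t = i then (n:ℝ)⁻¹ else 0 := by
        intro t _
        rw [hchoice t]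
        by_cases h : t = i
        · rw [if_pos h, if_pos (by rw [h]), mul_one]
        · rw [if_neg h, if_neg (fun he => h (hainj he).symm), mul_zero]
      rw [Finset.sum_congr rfl this, Finset.sum_ite_eq' Finset.univ i (fun _ => (n:ℝ)⁻¹),
        if_pos (Finset.mem_univ i)]
    have hr := hrat ({a0}ᶜ : Finset A) hM1mem (aa i) (haamem i)
    rw [hv] at hr
    rw [hr]
    symm
    apply sum_mul_const_support (lam _) (hcomp _ hM1mem).1.1 (hcomp _ hM1mem).1.2
    intro S hS
    apply probOf_congr
    intro rr _
    rw [eventS_iff_a0 hxel (hsupp _ hM1mem S hS) (ha0 i) rr]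
    constructor
    · rintro ⟨h1, _⟩ b hb hbne
      exact h1 b (by rw [Finset.mem_compl, Finset.mem_singleton]; exact hb) hbne hb
    · intro h
      constructor
      · intro b hb hbne hb0
        exact h b hb0 hbne
      · intro h0
        rw [Finset.mem_compl, Finset.mem_singleton] at h0
        exact absurd rfl h0
  -- ## Step 2: pairwise comparison values
  have hBt_val : ∀ j : Fin n, j ≠ 0 →
      probOf μ (fun rr => Ranking.pref rr (xel (aa j)) (xel (aa 0))) = (n:ℝ)⁻¹ := by
    intro j hj
    have hPne : ({aa 0, aa j} : Finset A).Nonempty := ⟨aa 0, Finset.mem_insert_self _ _⟩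
    have hPmem : ({aa 0, aa j} : Finset A) ∈ fullDomain A := (mem_fullDomain _).mpr hPne
    have hP0 : a0 ∉ ({aa 0, aa j} : Finset A) := by
      intro h
      rcases Finset.mem_insert.mp h with h | h
      · exact ha0 0 h.symm
      · exact ha0 j ((Finset.mem_singleton.mp h).symm)
    have hchoice : ∀ t : Fin n, vertexChoice a0 (o t) (E t) ({aa 0, aa j} : Finset A)
        = if t = j then aa j else aa 0 := by
      intro t
      rw [vertexChoice_of_best a0 (o t) (E t) hPne (Or.inl hP0)]
      by_cases h : t = j
      · rw [if_pos h]
        apply Ranking.best_eq_of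
        · exact Finset.mem_insert.mpr (Or.inr (Finset.mem_singleton_self _))
        · intro b _ hbne
          rw [h]
          exact hpref_top j b hbne
      · rw [if_neg h]
        apply Ranking.best_eq_of
        · exact Finset.mem_insert_self _ _
        · intro b hb hbne
          have hbj : b = aa j := by
            rcases Finset.mem_insert.mp hb with h' | h'
            · exact absurd h' hbne
            · exact Finset.mem_singleton.mp h'
          by_cases ht0 : t = 0
          · rw [ht0]
            apply hpref_top 0
            rw [hbj]
            intro he
            exact hj (hainj he)
          · apply hpref_second t (fun he => ht0 (hainj he).symm)
            · rw [hbj]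
              exact fun he => h (hainj he).symm
            · exact hbne
    have hv : (∑ t : Fin n, (n:ℝ)⁻¹ • vertexSCF a0 (o t) (E t)) ({aa 0, aa j} : Finset A)
        (aa j) = (n:ℝ)⁻¹ := by
      rw [hFeval _ hPne (aa j)]
      have : ∀ t ∈ Finset.univ, (n:ℝ)⁻¹ * (if aa j = vertexChoice a0 (o t) (E t)
          ({aa 0, aa j} : Finset A) then (1:ℝ) else 0) = if t = j then (n:ℝ)⁻¹ else 0 := by
        intro t _
        rw [hchoice t]
        by_cases h : t = j
        · rw [if_pos h, if_pos rfl, mul_one, if_pos h]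
        · rw [if_neg h, if_neg (fun he => hj (hainj he)), mul_zero, if_neg h]
      rw [Finset.sum_congr rfl this, Finset.sum_ite_eq' Finset.univ j (fun _ => (n:ℝ)⁻¹),
        if_pos (Finset.mem_univ j)]
    have hr := hrat ({aa 0, aa j} : Finset A) hPmem (aa j)
      (Finset.mem_insert.mpr (Or.inr (Finset.mem_singleton_self _)))
    rw [hv] at hr
    rw [hr]
    symm
    apply sum_mul_const_support (lam _) (hcomp _ hPmem).1.1 (hcomp _ hPmem).1.2
    intro S hS
    apply probOf_congr
    intro rr _
    rw [eventS_iff_a0 hxel (hsupp _ hPmem S hS) (ha0 j) rr]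
    constructor
    · rintro ⟨h1, _⟩
      apply h1 (aa 0) (Finset.mem_insert_self _ _)
        (fun he => hj (hainj he).symm) (ha0 0)
    · intro h
      constructor
      · intro b hb hbne _
        have hbj : b = aa 0 := by
          rcases Finset.mem_insert.mp hb with h' | h'
          · exact h'
          · exact absurd (Finset.mem_singleton.mp h') hbne
        rw [hbj]
        exact h
      · intro h0
        exact absurd h0 hP0
  -- ## Step 3: on the support, Bt j implies Et j
  have hstar : ∀ j : Fin n, j ≠ 0 → ∀ rr, μ rr ≠ 0 →
      Ranking.pref rr (xel (aa j)) (xel (aa 0)) →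
      (∀ b, b ≠ a0 → b ≠ aa j → Ranking.pref rr (xel (aa j)) (xel b)) := by
    intro j hj
    apply probOf_eq_imp (μ := μ) hμ0
      (P := fun rr => ∀ b, b ≠ a0 → b ≠ aa j → Ranking.pref rr (xel (aa j)) (xel b))
      (Q := fun rr => Ranking.pref rr (xel (aa j)) (xel (aa 0)))
    · intro rr hEt
      exact hEt (aa 0) (ha0 0) (fun he => hj (hainj he).symm)
    · rw [hEt_val j, hBt_val j hj]
  -- ## Step 4: the events Et are pairwise incompatible
  have hdisj : ∀ (i i' : Fin n), i ≠ i' → ∀ rr : Ranking 𝒳,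
      (∀ b, b ≠ a0 → b ≠ aa i → Ranking.pref rr (xel (aa i)) (xel b)) →
      (∀ b, b ≠ a0 → b ≠ aa i' → Ranking.pref rr (xel (aa i')) (xel b)) → False := by
    intro i i' hne rr h1 h2
    have p1 := h1 (aa i') (ha0 i') (fun he => hne (hainj he).symm)
    have p2 := h2 (aa i) (ha0 i) (fun he => hne (hainj he))
    exact rr.pref_asymm p1 p2
  -- ## Step 5: representative rankings
  have hrtex : ∀ t : Fin n, ∃ rr, μ rr ≠ 0 ∧
      (∀ b, b ≠ a0 → b ≠ aa t → Ranking.pref rr (xel (aa t)) (xel b)) := by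
    intro t
    apply probOf_pos_exists μ hμ0
    rw [hEt_val t]
    exact hinv0
  choose rt hrt1 hrt2 using hrtex
  -- ## Step 6: the menus with the outside option
  have hpair0 : ({aa 0, aa 0} : Finset A) = {aa 0} := by
    rw [Finset.insert_eq_self]
    exact Finset.mem_singleton_self _
  have hCCne : ∀ j : Fin n, (insert a0 ({aa 0, aa j} : Finset A)).Nonempty :=
    fun j => ⟨a0, Finset.mem_insert_self _ _⟩
  have hCCmem : ∀ j : Fin n, insert a0 ({aa 0, aa j} : Finset A) ∈ fullDomain A :=
    fun j => (mem_fullDomain _).mpr (hCCne j)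
  have hCpne : (insert a0 ({aa 0} : Finset A)).Nonempty := ⟨a0, Finset.mem_insert_self _ _⟩
  have hCpmem : insert a0 ({aa 0} : Finset A) ∈ fullDomain A := (mem_fullDomain _).mpr hCpne
  have hC0ne : (insert a0 ({aa 1} : Finset A)).Nonempty := ⟨a0, Finset.mem_insert_self _ _⟩
  have hC0mem : insert a0 ({aa 1} : Finset A) ∈ fullDomain A := (mem_fullDomain _).mpr hC0ne
  have haa0CC : ∀ j : Fin n, aa 0 ∈ insert a0 ({aa 0, aa j} : Finset A) :=
    fun j => Finset.mem_insert.mpr (Or.inr (Finset.mem_insert_self _ _))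
  have haajCC : ∀ j : Fin n, aa j ∈ insert a0 ({aa 0, aa j} : Finset A) :=
    fun j => Finset.mem_insert.mpr (Or.inr (Finset.mem_insert.mpr
      (Or.inr (Finset.mem_singleton_self _))))
  -- ## Step 6a: CAP j, for j ≠ 0
  have hCAP : ∀ j : Fin n, j ≠ 0 → ∀ S, lam (insert a0 ({aa 0, aa j} : Finset A)) S ≠ 0 →
      ∀ rr, μ rr ≠ 0 → Ranking.pref rr (xel (aa 0)) (xel (aa j)) →
      ∀ u ∈ S a0, Ranking.pref rr (xel (aa 0)) u := by
    intro j hj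
    have hQval : probOf μ (fun rr => Ranking.pref rr (xel (aa 0)) (xel (aa j)))
        = 1 - (n:ℝ)⁻¹ := by
      rw [← hBt_val j hj, ← probOf_compl μ hμ1]
      apply probOf_congr
      intro rr _
      constructor
      · exact fun h => rr.pref_asymm h
      · intro h
        rcases rr.pref_total (hxelne 0 j (fun he => hj he.symm)) with h' | h'
        · exact h'
        · exact absurd h' h
    have hchoice : ∀ t : Fin n, vertexChoice a0 (o t) (E t) (insert a0 ({aa 0, aa j} : Finset A))
        = if t = j then a0 else aa 0 := by
      intro t
      by_cases h : t = j
      · rw [if_pos h, h]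
        exact vertexChoice_of_mem_notE a0 (o j) (E j) (hCCne j) (Finset.mem_insert_self _ _)
          (hE3 j hj)
      · rw [if_neg h]
        rw [vertexChoice_of_best a0 (o t) (E t) (hCCne j) (Or.inr (hE2 t j hj h))]
        apply Ranking.best_eq_of
        · exact haa0CC j
        · intro b hb hbne
          rcases Finset.mem_insert.mp hb with h' | h'
          · rw [h']
            exact hpref_a0last t (aa 0) (ha0 0)
          · rcases Finset.mem_insert.mp h' with h'' | h''
            · exact absurd h'' hbne
            · rw [Finset.mem_singleton.mp h'']
              by_cases ht0 : t = 0
              · rw [ht0]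
                apply hpref_top 0
                intro he
                exact hj (hainj he)
              · apply hpref_second t (fun he => ht0 (hainj he).symm)
                · intro he
                  exact h (hainj he).symm
                · intro he
                  exact hj (hainj he)
    have hv : (∑ t : Fin n, (n:ℝ)⁻¹ • vertexSCF a0 (o t) (E t))
        (insert a0 ({aa 0, aa j} : Finset A)) (aa 0) = 1 - (n:ℝ)⁻¹ := by
      rw [hFeval _ (hCCne j) (aa 0)]
      have : ∀ t ∈ Finset.univ, (n:ℝ)⁻¹ * (if aa 0 = vertexChoice a0 (o t) (E t)
          (insert a0 ({aa 0, aa j} : Finset A)) then (1:ℝ) else 0)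
          = (n:ℝ)⁻¹ - (if t = j then (n:ℝ)⁻¹ else 0) := by
        intro t _
        rw [hchoice t]
        by_cases h : t = j
        · rw [if_pos h, if_pos h, if_neg (ha0 0), mul_zero]
          ring
        · rw [if_neg h, if_neg h, if_pos rfl, mul_one, sub_zero]
      rw [Finset.sum_congr rfl this, Finset.sum_sub_distrib,
        Finset.sum_ite_eq' Finset.univ j (fun _ => (n:ℝ)⁻¹), if_pos (Finset.mem_univ j),
        Finset.sum_const, Finset.card_univ, Fintype.card_fin, nsmul_eq_mul,
        mul_inv_cancel₀ hn0]
    have hr := hrat _ (hCCmem j) (aa 0) (haa0CC j)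
    rw [hv] at hr
    have hr2 : (∑ S : A → Finset 𝒳, lam (insert a0 ({aa 0, aa j} : Finset A)) S *
        probOf μ (fun rr => Ranking.pref rr (xel (aa 0)) (xel (aa j)) ∧
          ∀ u ∈ S a0, Ranking.pref rr (xel (aa 0)) u)) = 1 - (n:ℝ)⁻¹ := by
      rw [hr]
      apply Finset.sum_congr rfl
      intro S _
      by_cases hS : lam (insert a0 ({aa 0, aa j} : Finset A)) S = 0
      · rw [hS, zero_mul, zero_mul]
      · congr 1
        apply probOf_congr
        intro rr _
        rw [eventS_iff_a0 hxel (hsupp _ (hCCmem j) S hS) (ha0 0) rr]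
        constructor
        · rintro ⟨h1, h3⟩
          refine ⟨?_, fun _ => h3⟩
          intro b hb hbne hb0
          rcases Finset.mem_insert.mp hb with h' | h'
          · exact absurd h' hb0
          · rcases Finset.mem_insert.mp h' with h'' | h''
            · exact absurd h'' hbne
            · rw [Finset.mem_singleton.mp h'']
              exact h1
        · rintro ⟨h1, h3⟩
          exact ⟨h1 (aa j) (haajCC j) (fun he => hj (hainj he)) (ha0 j),
            h3 (Finset.mem_insert_self _ _)⟩
    have hforced := sum_mul_eq_max (lam _) (hcomp _ (hCCmem j)).1.1 (hcomp _ (hCCmem j)).1.2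
      (g := fun S => probOf μ (fun rr => Ranking.pref rr (xel (aa 0)) (xel (aa j)) ∧
          ∀ u ∈ S a0, Ranking.pref rr (xel (aa 0)) u))
      (v := 1 - (n:ℝ)⁻¹)
      (by
        intro S _
        rw [← hQval]
        exact probOf_mono μ hμ0 (fun rr h => h.1))
      hr2
    intro S hS
    have heqS := hforced S hS
    rw [← hQval] at heqS
    have := probOf_eq_imp μ hμ0 (fun rr (h : _ ∧ _) => h.1) heqS
    intro rr hrr hQ
    exact (this rr hrr hQ).2
  -- ## Step 6b: REQ j, for j ≠ 0
  have hREQ : ∀ j : Fin n, j ≠ 0 → ∀ S, lam (insert a0 ({aa 0, aa j} : Finset A)) S ≠ 0 →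
      ∀ rr, μ rr ≠ 0 → Ranking.pref rr (xel (aa j)) (xel (aa 0)) →
      ∃ u ∈ S a0, ¬ Ranking.pref rr (xel (aa j)) u := by
    intro j hj
    have hchoice : ∀ t : Fin n, aa j ≠ vertexChoice a0 (o t) (E t)
        (insert a0 ({aa 0, aa j} : Finset A)) := by
      intro t
      by_cases h : t = j
      · rw [h, vertexChoice_of_mem_notE a0 (o j) (E j) (hCCne j) (Finset.mem_insert_self _ _)
          (hE3 j hj)]
        exact ha0 j
      · rw [vertexChoice_of_best a0 (o t) (E t) (hCCne j) (Or.inr (hE2 t j hj h))]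
        intro he
        have hbest : Ranking.best (o t) _ (hCCne j) ∈ _ := Ranking.best_mem (o t) _ (hCCne j)
        -- aa j equals the best, but aa 0 is strictly better
        have hp : (o t).pref (aa 0) (aa j) := by
          by_cases ht0 : t = 0
          · rw [ht0]
            apply hpref_top 0
            intro he'
            exact hj (hainj he')
          · apply hpref_second t (fun he' => ht0 (hainj he').symm)
            · intro he'
              exact h (hainj he').symm
            · intro he'
              exact hj (hainj he')
        have := Ranking.pref_best (o t) (haa0CC j) (by
          rw [← he]
          intro he'
          exact hj (hainj he').symm)
        rw [← he] at this
        exact (o t).pref_asymm hp this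
    have hv : (∑ t : Fin n, (n:ℝ)⁻¹ • vertexSCF a0 (o t) (E t))
        (insert a0 ({aa 0, aa j} : Finset A)) (aa j) = 0 := by
      rw [hFeval _ (hCCne j) (aa j)]
      apply Finset.sum_eq_zero
      intro t _
      rw [if_neg (hchoice t), mul_zero]
    have hr := hrat _ (hCCmem j) (aa j) (haajCC j)
    rw [hv] at hr
    have hr2 : (∑ S : A → Finset 𝒳, lam (insert a0 ({aa 0, aa j} : Finset A)) S *
        probOf μ (fun rr => Ranking.pref rr (xel (aa j)) (xel (aa 0)) ∧
          ∀ u ∈ S a0, Ranking.pref rr (xel (aa j)) u)) = 0 := by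
      rw [hr]
      apply Finset.sum_congr rfl
      intro S _
      by_cases hS : lam (insert a0 ({aa 0, aa j} : Finset A)) S = 0
      · rw [hS, zero_mul, zero_mul]
      · congr 1
        apply probOf_congr
        intro rr _
        rw [eventS_iff_a0 hxel (hsupp _ (hCCmem j) S hS) (ha0 j) rr]
        constructor
        · rintro ⟨h1, h3⟩
          refine ⟨?_, fun _ => h3⟩
          intro b hb hbne hb0
          rcases Finset.mem_insert.mp hb with h' | h'
          · exact absurd h' hb0
          · rcases Finset.mem_insert.mp h' with h'' | h''
            · rw [h'']
              exact h1
            · exact absurd (Finset.mem_singleton.mp h'') hbne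
        · rintro ⟨h1, h3⟩
          refine ⟨?_, h3 (Finset.mem_insert_self _ _)⟩
          exact h1 (aa 0) (haa0CC j) (fun he => hj (hainj he).symm) (ha0 0)
    have hzero := sum_mul_eq_zero (lam _) (hcomp _ (hCCmem j)).1.1
      (g := fun S => probOf μ (fun rr => Ranking.pref rr (xel (aa j)) (xel (aa 0)) ∧
          ∀ u ∈ S a0, Ranking.pref rr (xel (aa j)) u))
      (fun S _ => probOf_nonneg μ hμ0 _)
      hr2
    intro S hS rr hrr hBt
    have h0 := (probOf_eq_zero_iff μ hμ0 _).mp (hzero S hS) rr hrr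
    by_contra hcon
    push_neg at hcon
    exact h0 ⟨hBt, hcon⟩
  -- ## Step 6c: REQ at the pair menu {a0, aa 0}
  have hREQ0 : ∀ S, lam (insert a0 ({aa 0} : Finset A)) S ≠ 0 →
      ∀ rr, μ rr ≠ 0 → ∃ u ∈ S a0, ¬ Ranking.pref rr (xel (aa 0)) u := by
    have hv : (∑ t : Fin n, (n:ℝ)⁻¹ • vertexSCF a0 (o t) (E t))
        (insert a0 ({aa 0} : Finset A)) (aa 0) = 0 := by
      rw [hFeval _ hCpne (aa 0)]
      apply Finset.sum_eq_zero
      intro t _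
      rw [if_neg, mul_zero]
      rw [vertexChoice_of_mem_notE a0 (o t) (E t) hCpne (Finset.mem_insert_self _ _) (hE1 t)]
      exact ha0 0
    have hr := hrat _ hCpmem (aa 0) (Finset.mem_insert.mpr (Or.inr (Finset.mem_singleton_self _)))
    rw [hv] at hr
    have hr2 : (∑ S : A → Finset 𝒳, lam (insert a0 ({aa 0} : Finset A)) S *
        probOf μ (fun rr => ∀ u ∈ S a0, Ranking.pref rr (xel (aa 0)) u)) = 0 := by
      rw [hr]
      apply Finset.sum_congr rfl
      intro S _
      by_cases hS : lam (insert a0 ({aa 0} : Finset A)) S = 0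
      · rw [hS, zero_mul, zero_mul]
      · congr 1
        apply probOf_congr
        intro rr _
        rw [eventS_iff_a0 hxel (hsupp _ hCpmem S hS) (ha0 0) rr]
        constructor
        · intro h3
          refine ⟨?_, fun _ => h3⟩
          intro b hb hbne hb0
          rcases Finset.mem_insert.mp hb with h' | h'
          · exact absurd h' hb0
          · exact absurd (Finset.mem_singleton.mp h') hbne
        · rintro ⟨_, h3⟩
          exact h3 (Finset.mem_insert_self _ _)
    have hzero := sum_mul_eq_zero (lam _) (hcomp _ hCpmem).1.1
      (g := fun S => probOf μ (fun rr => ∀ u ∈ S a0, Ranking.pref rr (xel (aa 0)) u))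
      (fun S _ => probOf_nonneg μ hμ0 _)
      hr2
    intro S hS rr hrr
    have h0 := (probOf_eq_zero_iff μ hμ0 _).mp (hzero S hS) rr hrr
    by_contra hcon
    push_neg at hcon
    exact h0 hcon
  -- ## Step 6d: CAP at the menu {a0, aa 1}
  have hCAP0 : ∀ S, lam (insert a0 ({aa 1} : Finset A)) S ≠ 0 →
      ∀ rr, μ rr ≠ 0 → ∀ u ∈ S a0, Ranking.pref rr (xel (aa 1)) u := by
    have hv : (∑ t : Fin n, (n:ℝ)⁻¹ • vertexSCF a0 (o t) (E t))
        (insert a0 ({aa 1} : Finset A)) (aa 1) = 1 := by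
      rw [hFeval _ hC0ne (aa 1)]
      have : ∀ t ∈ Finset.univ, (n:ℝ)⁻¹ * (if aa 1 = vertexChoice a0 (o t) (E t)
          (insert a0 ({aa 1} : Finset A)) then (1:ℝ) else 0) = (n:ℝ)⁻¹ := by
        intro t _
        rw [if_pos, mul_one]
        rw [vertexChoice_of_best a0 (o t) (E t) hC0ne (Or.inr (hE4 t))]
        symm
        apply Ranking.best_eq_of
        · exact Finset.mem_insert.mpr (Or.inr (Finset.mem_singleton_self _))
        · intro b hb hbne
          rcases Finset.mem_insert.mp hb with h' | h'
          · rw [h']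
            exact hpref_a0last t (aa 1) (ha0 1)
          · exact absurd (Finset.mem_singleton.mp h') hbne
      rw [Finset.sum_congr rfl this, Finset.sum_const, Finset.card_univ, Fintype.card_fin,
        nsmul_eq_mul, mul_inv_cancel₀ hn0]
    have hr := hrat _ hC0mem (aa 1) (Finset.mem_insert.mpr (Or.inr (Finset.mem_singleton_self _)))
    rw [hv] at hr
    have hr2 : (∑ S : A → Finset 𝒳, lam (insert a0 ({aa 1} : Finset A)) S *
        probOf μ (fun rr => ∀ u ∈ S a0, Ranking.pref rr (xel (aa 1)) u)) = 1 := by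
      rw [hr]
      apply Finset.sum_congr rfl
      intro S _
      by_cases hS : lam (insert a0 ({aa 1} : Finset A)) S = 0
      · rw [hS, zero_mul, zero_mul]
      · congr 1
        apply probOf_congr
        intro rr _
        rw [eventS_iff_a0 hxel (hsupp _ hC0mem S hS) (ha0 1) rr]
        constructor
        · intro h3
          refine ⟨?_, fun _ => h3⟩
          intro b hb hbne hb0
          rcases Finset.mem_insert.mp hb with h' | h'
          · exact absurd h' hb0
          · exact absurd (Finset.mem_singleton.mp h') hbne
        · rintro ⟨_, h3⟩
          exact h3 (Finset.mem_insert_self _ _)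
    have hforced := sum_mul_eq_max (lam _) (hcomp _ hC0mem).1.1 (hcomp _ hC0mem).1.2
      (g := fun S => probOf μ (fun rr => ∀ u ∈ S a0, Ranking.pref rr (xel (aa 1)) u))
      (v := 1)
      (by
        intro S _
        rw [← probOf_true μ hμ1]
        exact probOf_mono μ hμ0 (fun rr _ => trivial))
      hr2
    intro S hS
    have heqS := hforced S hS
    rw [← probOf_true μ hμ1] at heqS
    have := probOf_eq_imp μ hμ0 (fun rr _ => trivial) heqS
    intro rr hrr
    exact this rr hrr trivial
  -- ## Step 7: pick compositions in the supports
  have hSSex : ∀ j : Fin n, ∃ S, lam (insert a0 ({aa 0, aa j} : Finset A)) S ≠ 0 :=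
    fun j => exists_ne_zero_of_sum_one (hcomp _ (hCCmem j)).1.2
  choose SS hSSne using hSSex
  obtain ⟨S0, hS0ne⟩ : ∃ S, lam (insert a0 ({aa 1} : Finset A)) S ≠ 0 :=
    exists_ne_zero_of_sum_one (hcomp _ hC0mem).1.2
  have hSS0ne' : lam (insert a0 ({aa 0} : Finset A)) (SS 0) ≠ 0 := by
    rw [← hpair0]
    exact hSSne 0
  -- ## Step 8: the witnesses
  have hwex : ∀ t : Fin n, ∃ u, u ∈ SS t a0 ∧ Ranking.pref (rt t) u (xel (aa t)) := by
    intro t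
    by_cases ht : t = 0
    · obtain ⟨u, hu, hnp⟩ := hREQ0 (SS 0) hSS0ne' (rt t) (hrt1 t)
      have humem : u ∈ SS t a0 := by rw [ht]; exact hu
      refine ⟨u, humem, ?_⟩
      have hune : u ≠ xel (aa t) := xel_ne_memX hxel (ha0 t)
        ((hsupp _ (hCCmem t) (SS t) (hSSne t) a0).1 humem)
      rcases (rt t).pref_total hune with h | h
      · exact h
      · exfalso
        apply hnp
        have ht' : aa t = aa 0 := by rw [ht]
        rw [ht'] at h
        exact h
    · have hBt : Ranking.pref (rt t) (xel (aa t)) (xel (aa 0)) :=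
        hrt2 t (aa 0) (ha0 0) (fun he => ht (hainj he).symm)
      obtain ⟨u, hu, hnp⟩ := hREQ t ht (SS t) (hSSne t) (rt t) (hrt1 t) hBt
      refine ⟨u, hu, ?_⟩
      have hune : u ≠ xel (aa t) := xel_ne_memX hxel (ha0 t)
        ((hsupp _ (hCCmem t) (SS t) (hSSne t) a0).1 hu)
      rcases (rt t).pref_total hune with h | h
      · exact h
      · exact absurd h hnp
  choose w hw1 hw2 using hwex
  -- ## Step 9: separation properties
  have hwa0 : ∀ t : Fin n, Ranking.pref (rt t) (w t) (xel (aa 0)) := by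
    intro t
    by_cases ht : t = 0
    · rw [← ht]
      exact hw2 t
    · exact (rt t).pref_trans (hw2 t) (hrt2 t (aa 0) (ha0 0) (fun he => ht (hainj he).symm))
  have hwa1 : ∀ t : Fin n, Ranking.pref (rt t) (w t) (xel (aa 1)) := by
    intro t
    by_cases ht : t = 1
    · rw [← ht]
      exact hw2 t
    · exact (rt t).pref_trans (hw2 t) (hrt2 t (aa 1) (ha0 1) (fun he => ht (hainj he).symm))
  have hQat : ∀ t j : Fin n, j ≠ 0 → t ≠ j →
      Ranking.pref (rt t) (xel (aa 0)) (xel (aa j)) := by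
    intro t j hj htj
    have hnBt : ¬ Ranking.pref (rt t) (xel (aa j)) (xel (aa 0)) := by
      intro hBt
      exact hdisj t j htj (rt t) (hrt2 t) (hstar j hj (rt t) (hrt1 t) hBt)
    rcases (rt t).pref_total (hxelne 0 j (fun he => hj he.symm)) with h | h
    · exact h
    · exact absurd h hnBt
  have hnotin : ∀ t j : Fin n, j ≠ 0 → t ≠ j → w t ∉ SS j a0 := by
    intro t j hj htj hin
    have := hCAP j hj (SS j) (hSSne j) (rt t) (hrt1 t) (hQat t j hj htj) (w t) hin
    exact (rt t).pref_asymm (hwa0 t) this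
  have hnotin0 : ∀ t : Fin n, w t ∉ S0 a0 := by
    intro t hin
    have := hCAP0 S0 hS0ne (rt t) (hrt1 t) (w t) hin
    exact (rt t).pref_asymm (hwa1 t) this
  -- ## Step 10: counting
  have hwinj : Function.Injective w := by
    intro t t' he
    by_contra hne
    by_cases ht' : t' = 0
    · have ht : t ≠ 0 := fun h => hne (h.trans ht'.symm)
      apply hnotin t' t ht (fun h => hne h.symm)
      rw [← he]
      exact hw1 t
    · apply hnotin t t' ht' hne
      rw [he]
      exact hw1 t'
  obtain ⟨ustar, hustar⟩ := (hsupp _ hC0mem S0 hS0ne a0).2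
  have hsubset : insert ustar (Finset.image w Finset.univ) ⊆ Xc.X a0 := by
    intro u hu
    rcases Finset.mem_insert.mp hu with h | h
    · rw [h]
      exact (hsupp _ hC0mem S0 hS0ne a0).1 hustar
    · obtain ⟨t, _, he⟩ := Finset.mem_image.mp h
      rw [← he]
      exact (hsupp _ (hCCmem t) (SS t) (hSSne t) a0).1 (hw1 t)
  have hcard1 : (insert ustar (Finset.image w Finset.univ)).card = n + 1 := by
    rw [Finset.card_insert_of_notMem, Finset.card_image_of_injective _ hwinj,
      Finset.card_univ, Fintype.card_fin]
    intro hmem'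
    obtain ⟨t, _, he⟩ := Finset.mem_image.mp hmem'
    apply hnotin0 t
    rw [he]
    exact hustar
  have hle := Finset.card_le_card hsubset
  rw [hcard1, hcardX] at hle
  omega

/-- **Remark 3.4**: for `2 ≤ n < |𝒜_A| + 1`, (i) every deterministic menu-effect choice
function `ρ^≻_𝓔` belongs to `RU(n)`, and (ii) `RU(n)` is not convex. -/
theorem stmt7 {A 𝒳 : Type} [Fintype A] [DecidableEq A] [Fintype 𝒳] [DecidableEq 𝒳]
    (a0 : A) (hX : 2 * ({a0}ᶜ : Finset A).card + 1 ≤ Fintype.card 𝒳)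
    (n : ℕ) (h2 : 2 ≤ n) (hn : n < ({a0}ᶜ : Finset A).card + 1) :
    (∀ (r : Ranking A) (E : Finset (Finset A)), E ⊆ fullDomain A →
      RUn 𝒳 a0 (fullDomain A) n (vertexSCF a0 r E)) ∧
    ¬ Convex ℝ {ρ : Finset A → A → ℝ | IsSCF (fullDomain A) ρ ∧
        RUn 𝒳 a0 (fullDomain A) n ρ} := by
  constructor
  · intro r E _
    exact partI a0 hX n h2 hn r E
  · intro hconv
    haveI : NeZero n := ⟨by omega⟩
    have hnm : n ≤ ({a0}ᶜ : Finset A).card := by omega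
    have h10 : (0 : Fin n) ≠ (1 : Fin n) := by
      intro h
      have hval : ((1 : Fin n) : ℕ) = 1 % n := rfl
      have h1n : 1 % n = 1 := Nat.mod_eq_of_lt (by omega)
      have := congrArg (fun x : Fin n => (x : ℕ)) h
      simp only [Fin.val_zero, hval, h1n] at this
      omega
    obtain ⟨aa, ha0, hainj⟩ : ∃ aa : Fin n → A,
        (∀ i, aa i ≠ a0) ∧ Function.Injective aa := by
      refine ⟨fun i => ((({a0}ᶜ : Finset A).equivFin.symm) (Fin.castLE hnm i) : A), ?_, ?_⟩
      · intro i
        have hmem := ((({a0}ᶜ : Finset A).equivFin.symm) (Fin.castLE hnm i)).2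
        rw [Finset.mem_compl, Finset.mem_singleton] at hmem
        exact hmem
      · intro i j h
        have h1 := (({a0}ᶜ : Finset A).equivFin.symm).injective (Subtype.ext h)
        exact Fin.castLE_injective hnm h1
    obtain ⟨o, hpref⟩ : ∃ o : Fin n → Ranking A, ∀ t x y, (o t).pref x y ↔
        prio a0 (Fintype.card A) (fun b => ((Fintype.equivFin A) b).val) aa t x <
          prio a0 (Fintype.card A) (fun b => ((Fintype.equivFin A) b).val) aa t y := by
      have heA : Function.Injective (fun b : A => ((Fintype.equivFin A) b).val) := by
        intro x y h
        exact (Fintype.equivFin A).injective (Fin.ext h)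
      have heAlt : ∀ b : A, ((Fintype.equivFin A) b).val < Fintype.card A :=
        fun b => ((Fintype.equivFin A) b).isLt
      exact ⟨fun t => rankingOfPriority _ (prio_inj heA heAlt t),
        fun t x y => pref_rankingOfPriority _ _ x y⟩
    have heAlt : ∀ b : A, ((Fintype.equivFin A) b).val < Fintype.card A :=
      fun b => ((Fintype.equivFin A) b).isLt
    have hpref_top : ∀ t : Fin n, ∀ b, b ≠ aa t → (o t).pref (aa t) b :=
      fun t b hb => (hpref t _ _).mpr (prio_top heAlt t hb)
    have hpref_second : ∀ t : Fin n, aa 0 ≠ aa t → ∀ b, b ≠ aa t → b ≠ aa 0 →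
        (o t).pref (aa 0) b :=
      fun t h0t b h1' h2' => (hpref t _ _).mpr (prio_second heAlt t h0t h1' h2')
    have hpref_a0last : ∀ t : Fin n, ∀ b, b ≠ a0 → (o t).pref b a0 :=
      fun t b hb => (hpref t _ _).mpr (prio_a0last heAlt t
        (fun he => ha0 t he.symm) (fun he => ha0 0 he.symm) hb)
    -- the collections E t
    refine partII_core a0 n h2 aa ha0 hainj o hpref_top hpref_second hpref_a0last
      (fun t => (fullDomain A).filter (fun B => ¬(B = insert a0 ({aa 0} : Finset A) ∨
        B = insert a0 ({aa 0, aa t} : Finset A))))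
      ?_ ?_ ?_ ?_ hconv (fun r Ec => partI a0 hX n h2 hn r Ec)
    · intro t hmem
      exact (Finset.mem_filter.mp hmem).2 (Or.inl rfl)
    · intro t j hj htj
      apply Finset.mem_filter.mpr
      refine ⟨(mem_fullDomain _).mpr ⟨a0, Finset.mem_insert_self _ _⟩, ?_⟩
      rintro (h | h)
      · have hmem : aa j ∈ insert a0 ({aa 0} : Finset A) := by
          rw [← h]
          exact Finset.mem_insert.mpr (Or.inr (Finset.mem_insert.mpr
            (Or.inr (Finset.mem_singleton_self _))))
        rcases Finset.mem_insert.mp hmem with h' | h'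
        · exact ha0 j h'
        · exact hj (hainj (Finset.mem_singleton.mp h'))
      · have hmem : aa j ∈ insert a0 ({aa 0, aa t} : Finset A) := by
          rw [← h]
          exact Finset.mem_insert.mpr (Or.inr (Finset.mem_insert.mpr
            (Or.inr (Finset.mem_singleton_self _))))
        rcases Finset.mem_insert.mp hmem with h' | h'
        · exact ha0 j h'
        · rcases Finset.mem_insert.mp h' with h'' | h''
          · exact hj (hainj h'')
          · exact htj (hainj (Finset.mem_singleton.mp h'')).symm
    · intro j hj hmem
      exact (Finset.mem_filter.mp hmem).2 (Or.inr rfl)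
    · intro t
      apply Finset.mem_filter.mpr
      refine ⟨(mem_fullDomain _).mpr ⟨a0, Finset.mem_insert_self _ _⟩, ?_⟩
      rintro (h | h)
      · have hmem : aa 1 ∈ insert a0 ({aa 0} : Finset A) := by
          rw [← h]
          exact Finset.mem_insert.mpr (Or.inr (Finset.mem_singleton_self _))
        rcases Finset.mem_insert.mp hmem with h' | h'
        · exact ha0 1 h'
        · exact h10 (hainj (Finset.mem_singleton.mp h')).symm
      · have hmem : aa 0 ∈ insert a0 ({aa 1} : Finset A) := by
          rw [h]
          exact Finset.mem_insert.mpr (Or.inr (Finset.mem_insert_self _ _))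
        rcases Finset.mem_insert.mp hmem with h' | h'
        · exact ha0 0 h'
        · exact h10 (hainj (Finset.mem_singleton.mp h'))
end
end

section
/- Assume the outside option setup (𝒜_N = {a₀}), the full domain 𝒟 = 2^𝒜 ∖ {∅}, and |𝒳| ≥ |𝒜_A| + n. For any integer n ≥ 2 and any sequence (≻_i, 𝓔_i)_{i=1}^{n−1} of linear orders ≻_i on 𝒜 and collections 𝓔_i ⊆ 𝒟, every convex combination of ρ^{≻_1}_{𝓔_1}, …, ρ^{≻_{n−1}}_{𝓔_{n−1}} belongs to RU(n). -/
open Finset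

noncomputable section

lemma exists_ranking_of_key {𝒳 : Type} [Fintype 𝒳] [DecidableEq 𝒳] (key : 𝒳 → ℕ)
    (hk : Function.Injective key) : ∃ r : Ranking 𝒳, ∀ x y, r.pref x y ↔ key x < key y := by
  classical
  set s : Finset ℕ := Finset.univ.image key with hs
  have hcard : s.card = Fintype.card 𝒳 := by
    rw [hs, Finset.card_image_of_injective _ hk, Finset.card_univ]
  let e := s.orderIsoOfFin hcard
  let f : 𝒳 → Fin (Fintype.card 𝒳) := fun x => e.symm ⟨key x, by simp [hs]⟩
  have hfk : ∀ x y, f x < f y ↔ key x < key y := by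
    intro x y
    rw [OrderIso.lt_iff_lt]
    exact Subtype.mk_lt_mk
  have hf : Function.Injective f := by
    intro x y hxy
    apply hk
    exact congrArg Subtype.val (e.symm.injective hxy)
  refine ⟨Equiv.ofBijective f ((Fintype.bijective_iff_injective_and_card f).mpr ⟨hf, by simp⟩),
    fun x y => ?_⟩
  exact hfk x y

lemma best_spec {T : Type} [Fintype T] [DecidableEq T] (r : Ranking T) (D : Finset T)
    (hD : D.Nonempty) : r.best D hD ∈ D ∧ ∀ c ∈ D, r (r.best D hD) ≤ r c := by
  classical
  have hm := (D.image fun x => r x).min'_mem (hD.image fun x => r x)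
  obtain ⟨c, hc, hrc⟩ := Finset.mem_image.mp hm
  have hbest : r.best D hD = c := by
    rw [Ranking.best, ← hrc, Equiv.symm_apply_apply]
  constructor
  · rw [hbest]; exact hc
  · intro d hd
    rw [Ranking.best, Equiv.apply_symm_apply]
    exact Finset.min'_le _ _ (Finset.mem_image_of_mem _ hd)

lemma eq_best_iff {T : Type} [Fintype T] [DecidableEq T] (r : Ranking T) (D : Finset T)
    (hD : D.Nonempty) (b : T) :
    b = r.best D hD ↔ b ∈ D ∧ ∀ c ∈ D, c ≠ b → r.pref b c := by
  obtain ⟨hmem, hle⟩ := best_spec r D hD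
  constructor
  · rintro rfl
    refine ⟨hmem, fun c hc hne => ?_⟩
    exact lt_of_le_of_ne (hle c hc) (fun h => hne (r.injective h.symm))
  · rintro ⟨hb, hbeat⟩
    by_contra hne
    have := hbeat _ hmem (fun h => hne h.symm)
    exact absurd (hle b hb) (not_le.mpr this)

/-- **Lemma 3.1**: any convex combination of `n − 1` deterministic menu-effect choice
functions `ρ^{≻_i}_{𝓔_i}` belongs to `RU(n)`. -/
theorem stmt9 {A 𝒳 : Type} [Fintype A] [DecidableEq A] [Fintype 𝒳] [DecidableEq 𝒳]
    (a0 : A) (n : ℕ) (hn : 2 ≤ n)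
    (hX : ({a0}ᶜ : Finset A).card + n ≤ Fintype.card 𝒳)
    (r : Fin (n - 1) → Ranking A) (E : Fin (n - 1) → Finset (Finset A))
    (hE : ∀ i, E i ⊆ fullDomain A)
    (w : Fin (n - 1) → ℝ) (hw : ∀ i, 0 ≤ w i) (hw1 : (∑ i, w i) = 1) :
    RUn 𝒳 a0 (fullDomain A) n
      (fun B a => ∑ i, w i * vertexSCF a0 (r i) (E i) B a) := by
  classical
  have npos : 0 < n := by omega
  -- an embedding of atoms-plus-block into the alternatives
  have hcompl : ({a0}ᶜ : Finset A).card = Fintype.card A - 1 := by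
    rw [Finset.card_compl, Finset.card_singleton]
  have hcardA : 1 ≤ Fintype.card A := Fintype.card_pos_iff.mpr ⟨a0⟩
  have hcard : Fintype.card (A ⊕ Fin (n - 1)) ≤ Fintype.card 𝒳 := by
    rw [Fintype.card_sum, Fintype.card_fin]
    rw [hcompl] at hX
    omega
  obtain ⟨ι⟩ := Function.Embedding.nonempty_of_card_le hcard
  -- positions of aggregates in the given rankings
  set p : Fin (n - 1) → A → ℕ := fun i b => ((r i) b : ℕ) with hp
  have pinj : ∀ i, ∀ b c : A, p i b = p i c → b = c := fun i b c h =>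
    (r i).injective (Fin.val_injective h)
  have plt : ∀ i b, p i b < Fintype.card A := fun i b => ((r i) b).isLt
  -- helper arithmetic
  have hms : ∀ x y : ℕ, x < y → n * x + n ≤ n * y := by
    intro x y h
    have h2 : n * (x + 1) ≤ n * y := Nat.mul_le_mul (le_refl n) h
    rw [Nat.mul_add, Nat.mul_one] at h2
    exact h2
  have hmono : ∀ x y : ℕ, n * x < n * y ↔ x < y := by
    intro x y
    constructor
    · intro h
      by_contra hc
      push_neg at hc
      exact absurd (Nat.mul_le_mul (le_refl n) hc) (not_le.mpr h)
    · intro h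
      have := hms x y h
      omega
  have hjlt : ∀ j : Fin (n - 1), (j : ℕ) + 2 ≤ n := fun j => by
    have := j.isLt; omega
  -- keys on the sum type
  set K : Fin (n - 1) → A ⊕ Fin (n - 1) → ℕ := fun i u =>
    Sum.elim (fun a => 1 + n * p i a)
      (fun j : Fin (n - 1) => if j = i then 0 else 1 + n * p i a0 + 1 + (j : ℕ)) u with hK
  have hKcross : ∀ (i : Fin (n - 1)) (a : A) (j : Fin (n - 1)),
      K i (Sum.inl a) ≠ K i (Sum.inr j) := by
    intro i a j h
    simp only [hK, Sum.elim_inl, Sum.elim_inr] at h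
    split_ifs at h with hji
    · omega
    · rcases le_or_gt (p i a) (p i a0) with hle | hlt
      · have := Nat.mul_le_mul (le_refl n) hle
        omega
      · have := hms _ _ hlt
        have := hjlt j
        omega
  have Kinj : ∀ i, Function.Injective (K i) := by
    intro i u v huv
    cases u with
    | inl a =>
      cases v with
      | inl b =>
        simp only [hK, Sum.elim_inl] at huv
        have : p i a = p i b := by
          rcases Nat.lt_trichotomy (p i a) (p i b) with h | h | h
          · exact absurd huv (by have := hms _ _ h; omega)
          · exact h
          · exact absurd huv (by have := hms _ _ h; omega)
        rw [pinj i a b this]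
      | inr j => exact absurd huv (hKcross i a j)
    | inr j =>
      cases v with
      | inl b => exact absurd huv.symm (hKcross i b j)
      | inr k =>
        simp only [hK, Sum.elim_inr] at huv
        split_ifs at huv with h1 h2 h2
        · rw [h1, h2]
        · omega
        · omega
        · exact congrArg Sum.inr (Fin.val_injective (by omega : (j : ℕ) = (k : ℕ)))
  -- bound on K
  set N : ℕ := 1 + n * Fintype.card A with hN
  have Kbound : ∀ i u, K i u < N := by
    intro i u
    cases u with
    | inl a =>
      simp only [hK, Sum.elim_inl, hN]
      have := hms _ _ (plt i a)
      omega
    | inr j =>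
      simp only [hK, Sum.elim_inr, hN]
      split_ifs with hji
      · omega
      · have := hms _ _ (plt i a0)
        have := hjlt j
        omega
  -- full key on 𝒳
  set g := Fintype.equivFin 𝒳 with hg
  set key : Fin (n - 1) → 𝒳 → ℕ := fun i x =>
    if h : ∃ u, ι u = x then K i h.choose else N + (g x : ℕ) with hkey
  have keyι : ∀ i u, key i (ι u) = K i u := by
    intro i u
    have h : ∃ u', ι u' = ι u := ⟨u, rfl⟩
    simp only [hkey, dif_pos h]
    rw [ι.injective h.choose_spec]
  have keyinj : ∀ i, Function.Injective (key i) := by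
    intro i x y hxy
    by_cases hx : ∃ u, ι u = x <;> by_cases hy : ∃ v, ι v = y
    · obtain ⟨u, rfl⟩ := hx
      obtain ⟨v, rfl⟩ := hy
      rw [keyι, keyι] at hxy
      exact congrArg ι (Kinj i hxy)
    · exfalso
      obtain ⟨u, rfl⟩ := hx
      rw [keyι] at hxy
      simp only [hkey, dif_neg hy] at hxy
      have := Kbound i u
      omega
    · exfalso
      obtain ⟨v, rfl⟩ := hy
      rw [keyι] at hxy
      simp only [hkey, dif_neg hx] at hxy
      have := Kbound i v
      omega
    · simp only [hkey, dif_neg hx, dif_neg hy] at hxy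
      exact g.injective (Fin.val_injective (by omega : (g x : ℕ) = (g y : ℕ)))
  -- the rankings on 𝒳
  have hrk0 : ∀ i, ∃ rr : Ranking 𝒳, ∀ x y, rr.pref x y ↔ key i x < key i y :=
    fun i => exists_ranking_of_key (key i) (keyinj i)
  choose rk hrk using hrk0
  -- key values
  have keyinl : ∀ i b, key i (ι (Sum.inl b)) = 1 + n * p i b := by
    intro i b; rw [keyι]; rfl
  have keyinr : ∀ i j, key i (ι (Sum.inr j))
      = if j = i then 0 else 1 + n * p i a0 + 1 + (j : ℕ) := by
    intro i j; rw [keyι]; rfl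
  -- the aggregation correspondence
  set Z : Finset 𝒳 := insert (ι (Sum.inl a0))
      (Finset.univ.image fun j : Fin (n - 1) => ι (Sum.inr j)) with hZ
  have hstar_not_mem : ι (Sum.inl a0) ∉
      (Finset.univ.image fun j : Fin (n - 1) => ι (Sum.inr j)) := by
    simp only [Finset.mem_image, Finset.mem_univ, true_and]
    rintro ⟨j, hj⟩
    exact Sum.inr_ne_inl (ι.injective hj)
  have hZcard : Z.card = n := by
    rw [hZ, Finset.card_insert_of_notMem hstar_not_mem,
      Finset.card_image_of_injective _ (fun j k h => Sum.inr_injective (ι.injective h)),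
      Finset.card_univ, Fintype.card_fin]
    omega
  set XF : A → Finset 𝒳 := fun a => if a = a0 then Z else {ι (Sum.inl a)} with hXF
  have hZelim : ∀ x ∈ Z, x = ι (Sum.inl a0) ∨ ∃ j : Fin (n - 1), x = ι (Sum.inr j) := by
    intro x hx
    rw [hZ, Finset.mem_insert] at hx
    rcases hx with h | h
    · exact Or.inl h
    · obtain ⟨j, _, hj⟩ := Finset.mem_image.mp h
      exact Or.inr ⟨j, hj.symm⟩
  have hZne : ∀ x ∈ Z, ∀ c : A, c ≠ a0 → x ≠ ι (Sum.inl c) := by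
    intro x hx c hc hxc
    rcases hZelim x hx with rfl | ⟨j, rfl⟩
    · exact hc (Sum.inl_injective (ι.injective hxc)).symm
    · exact Sum.inr_ne_inl (ι.injective hxc)
  have hdisj : ∀ a b : A, a ≠ b → Disjoint (XF a) (XF b) := by
    intro a b hab
    by_cases ha : a = a0 <;> by_cases hb : b = a0
    · exact absurd (ha.trans hb.symm) hab
    · subst a
      simp only [hXF, eq_self_iff_true, if_true]
      rw [if_neg hb]
      exact Finset.disjoint_singleton_right.mpr (fun h => hZne _ h b hb rfl)
    · subst hb
      simp only [hXF, eq_self_iff_true, if_true]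
      rw [if_neg ha]
      exact Finset.disjoint_singleton_left.mpr (fun h => hZne _ h a ha rfl)
    · rw [hXF]
      simp only [if_neg ha, if_neg hb]
      exact Finset.disjoint_singleton.mpr
        (fun h => hab (Sum.inl_injective (ι.injective h)))
  have hatomic : ∀ a ∉ ({a0} : Finset A), (XF a).card = 1 := by
    intro a ha
    rw [Finset.mem_singleton] at ha
    simp only [hXF, eq_self_iff_true, if_true]
    rw [if_neg ha]
    exact Finset.card_singleton _
  have hnonatomic : ∀ a ∈ ({a0} : Finset A), 2 ≤ (XF a).card := by
    intro a ha
    rw [Finset.mem_singleton] at ha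
    simp only [hXF, eq_self_iff_true, if_true]
    rw [if_pos ha, hZcard]
    exact hn
  -- the composition profile and distributions
  set SB : Finset A → A → Finset 𝒳 := fun B a =>
    if a = a0 then insert (ι (Sum.inl a0))
      ((Finset.univ.filter fun j => B ∉ E j).image fun j => ι (Sum.inr j))
    else {ι (Sum.inl a)} with hSB
  have memSB0_star : ∀ B : Finset A, ι (Sum.inl a0) ∈ SB B a0 := by
    intro B
    simp only [hSB, eq_self_iff_true, if_true]
    exact Finset.mem_insert_self _ _
  have memSB0_z : ∀ (B : Finset A) (j : Fin (n - 1)), B ∉ E j → ι (Sum.inr j) ∈ SB B a0 := by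
    intro B j hj
    simp only [hSB, eq_self_iff_true, if_true]
    exact Finset.mem_insert_of_mem (Finset.mem_image.mpr
      ⟨j, Finset.mem_filter.mpr ⟨Finset.mem_univ _, hj⟩, rfl⟩)
  have memSB0_elim : ∀ (B : Finset A) (y : 𝒳), y ∈ SB B a0 →
      y = ι (Sum.inl a0) ∨ ∃ j : Fin (n - 1), B ∉ E j ∧ y = ι (Sum.inr j) := by
    intro B y hy
    simp only [hSB, eq_self_iff_true, if_true] at hy
    rw [Finset.mem_insert] at hy
    rcases hy with h | h
    · exact Or.inl h
    · obtain ⟨j, hj, hjy⟩ := Finset.mem_image.mp h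
      exact Or.inr ⟨j, (Finset.mem_filter.mp hj).2, hjy.symm⟩
  have memSBa : ∀ (B : Finset A) (a : A), a ≠ a0 → ∀ y, y ∈ SB B a ↔ y = ι (Sum.inl a) := by
    intro B a ha y
    simp only [hSB, eq_self_iff_true, if_true]
    rw [if_neg ha]
    exact Finset.mem_singleton
  -- block key bounds
  have hblock : ∀ (i : Fin (n - 1)) (B : Finset A), ∀ y ∈ SB B a0, y ≠ ι (Sum.inr i) →
      1 + n * p i a0 ≤ key i y ∧ key i y ≤ n * p i a0 + n := by
    intro i B y hy hne
    rcases memSB0_elim B y hy with rfl | ⟨j, _, rfl⟩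
    · rw [keyinl]
      omega
    · have hji : j ≠ i := fun h => hne (by rw [h])
      rw [keyinr, if_neg hji]
      have := hjlt j
      omega
  -- the measure over rankings and the composition distribution
  set μ : Ranking 𝒳 → ℝ := fun t => ∑ i, if t = rk i then w i else 0 with hμ
  set lam : Finset A → (A → Finset 𝒳) → ℝ := fun B S => if S = SB B then 1 else 0 with hlam
  -- the core pointwise identity
  have hcore : ∀ (i : Fin (n - 1)) (B : Finset A) (hB : B.Nonempty), ∀ a ∈ B,
      vertexSCF a0 (r i) (E i) B a
        = if (∃ x ∈ SB B a, ∀ b ∈ B, b ≠ a → ∀ y ∈ SB B b, Ranking.pref (rk i) x y)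
          then 1 else 0 := by
    intro i B hB a haB
    rw [vertexSCF, dif_pos hB]
    by_cases hcase : a0 ∉ B ∨ B ∈ E i
    · rw [if_pos hcase]
      have hiff : a = Ranking.best (r i) B hB ↔
          (∃ x ∈ SB B a, ∀ b ∈ B, b ≠ a → ∀ y ∈ SB B b, Ranking.pref (rk i) x y) := by
        rw [eq_best_iff]
        simp only [haB, true_and]
        have hprefA : ∀ b c : A, (r i).pref b c ↔ p i b < p i c := fun b c => Iff.rfl
        by_cases ha : a = a0
        · subst a
          have hEi : B ∈ E i := hcase.resolve_left (by simp [haB])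
          constructor
          · intro hQ
            refine ⟨ι (Sum.inl a0), memSB0_star B, ?_⟩
            intro b hb hba y hy
            rw [(memSBa B b hba y)] at hy
            subst hy
            rw [hrk i, keyinl, keyinl]
            have := hms _ _ ((hprefA a0 b).mp (hQ b hb hba))
            omega
          · rintro ⟨x, hx, hbeat⟩ c hc hca
            have hxne : x ≠ ι (Sum.inr i) := by
              rcases memSB0_elim B x hx with rfl | ⟨j, hj, rfl⟩
              · intro h; exact Sum.inl_ne_inr (ι.injective h)
              · intro h
                rw [Sum.inr_injective (ι.injective h)] at hj
                exact hj hEi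
            obtain ⟨hlo, hhi⟩ := hblock i B x hx hxne
            have hbx := hbeat c hc hca (ι (Sum.inl c)) ((memSBa B c hca _).mpr rfl)
            rw [hrk i, keyinl] at hbx
            rw [hprefA]
            have hne : p i c ≠ p i a0 := fun h => hca (pinj i c a0 h)
            rcases Nat.lt_or_ge (p i a0) (p i c) with h | h
            · exact h
            · exfalso
              have := hms _ _ (lt_of_le_of_ne h hne)
              omega
        · constructor
          · intro hQ
            refine ⟨ι (Sum.inl a), (memSBa B a ha _).mpr rfl, ?_⟩
            intro b hb hba y hy
            by_cases hb0 : b = a0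
            · subst b
              have hEi : B ∈ E i := hcase.resolve_left (by simp [hb])
              have hyne : y ≠ ι (Sum.inr i) := by
                rcases memSB0_elim B y hy with rfl | ⟨j, hj, rfl⟩
                · intro h; exact Sum.inl_ne_inr (ι.injective h)
                · intro h
                  rw [Sum.inr_injective (ι.injective h)] at hj
                  exact hj hEi
              obtain ⟨hlo, hhi⟩ := hblock i B y hy hyne
              rw [hrk i, keyinl]
              have := hms _ _ ((hprefA a a0).mp (hQ a0 hb hba))
              omega
            · rw [(memSBa B b hb0 y)] at hy
              subst hy
              rw [hrk i, keyinl, keyinl]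
              have := hms _ _ ((hprefA a b).mp (hQ b hb hba))
              omega
          · rintro ⟨x, hx, hbeat⟩ c hc hca
            rw [(memSBa B a ha x)] at hx
            subst hx
            rw [hprefA]
            by_cases hc0 : c = a0
            · subst c
              have hbx := hbeat a0 hc hca (ι (Sum.inl a0)) (memSB0_star B)
              rw [hrk i, keyinl, keyinl] at hbx
              exact (hmono _ _).mp (by omega)
            · have hbx := hbeat c hc hca (ι (Sum.inl c)) ((memSBa B c hc0 _).mpr rfl)
              rw [hrk i, keyinl, keyinl] at hbx
              exact (hmono _ _).mp (by omega)
      exact if_congr hiff rfl rfl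
    · push_neg at hcase
      obtain ⟨h0B, hEi⟩ := hcase
      rw [if_neg (by push_neg; exact ⟨h0B, hEi⟩)]
      by_cases ha : a = a0
      · subst a
        rw [if_pos rfl]
        have hP : ∃ x ∈ SB B a0, ∀ b ∈ B, b ≠ a0 → ∀ y ∈ SB B b,
            Ranking.pref (rk i) x y := by
          refine ⟨ι (Sum.inr i), memSB0_z B i hEi, ?_⟩
          intro b hb hb0 y hy
          rw [(memSBa B b hb0 y)] at hy
          subst hy
          rw [hrk i, keyinr, if_pos rfl, keyinl]
          omega
        rw [if_pos hP]
      · rw [if_neg ha]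
        have hnP : ¬ (∃ x ∈ SB B a, ∀ b ∈ B, b ≠ a → ∀ y ∈ SB B b,
            Ranking.pref (rk i) x y) := by
          rintro ⟨x, hx, hbeat⟩
          rw [(memSBa B a ha x)] at hx
          subst hx
          have := hbeat a0 h0B (fun h => ha h.symm) (ι (Sum.inr i)) (memSB0_z B i hEi)
          rw [hrk i, keyinr, if_pos rfl, keyinl] at this
          omega
        rw [if_neg hnP]
  -- assemble
  refine ⟨⟨XF, hdisj, hatomic, hnonatomic⟩, ?_, μ, lam, ?_, ?_, ?_⟩
  · show (XF a0).card = n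
    simp only [hXF, eq_self_iff_true, if_true]
    exact hZcard
  · -- IsDistr μ
    constructor
    · intro t
      apply Finset.sum_nonneg
      intro i _
      split_ifs
      · exact hw i
      · exact le_rfl
    · simp only [hμ]
      rw [Finset.sum_comm]
      rw [← hw1]
      refine Finset.sum_congr rfl fun i _ => ?_
      simp
  · -- IsCompDistr
    intro B hBD
    refine ⟨⟨?_, ?_⟩, ?_⟩
    · intro S
      simp only [hlam]
      split_ifs
      · exact zero_le_one
      · exact le_rfl
    · simp only [hlam]
      simp
    · intro S hS a
      have hSeq : S = SB B := by
        by_contra h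
        exact hS (by simp only [hlam]; simp [h])
      subst hSeq
      by_cases ha : a = a0
      · subst a
        constructor
        · intro y hy
          show y ∈ XF a0
          simp only [hXF, eq_self_iff_true, if_true]
          rcases memSB0_elim B y hy with rfl | ⟨j, _, rfl⟩
          · rw [hZ]; exact Finset.mem_insert_self _ _
          · rw [hZ]
            exact Finset.mem_insert_of_mem (Finset.mem_image.mpr ⟨j, Finset.mem_univ _, rfl⟩)
        · exact ⟨_, memSB0_star B⟩
      · constructor
        · intro y hy
          rw [memSBa B a ha y] at hy
          subst hy
          show ι (Sum.inl a) ∈ XF a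
          simp only [hXF, eq_self_iff_true, if_true]
          rw [if_neg ha]
          exact Finset.mem_singleton_self _
        · exact ⟨_, (memSBa B a ha _).mpr rfl⟩
  · -- the rationalization equation
    intro B hBD a haB
    have hBne : B.Nonempty := (Finset.mem_filter.mp hBD).2
    have h1 : (∑ S : A → Finset 𝒳, lam B S *
        probOf μ (fun rr => ∃ x ∈ S a, ∀ b ∈ B, b ≠ a → ∀ y ∈ S b, Ranking.pref rr x y))
        = probOf μ (fun rr => ∃ x ∈ SB B a, ∀ b ∈ B, b ≠ a → ∀ y ∈ SB B b,
            Ranking.pref rr x y) := by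
      rw [Finset.sum_eq_single (SB B)]
      · simp only [hlam]; simp
      · intro S _ hS
        simp only [hlam]
        simp [hS]
      · intro h
        exact absurd (Finset.mem_univ _) h
    have h2 : probOf μ (fun rr => ∃ x ∈ SB B a, ∀ b ∈ B, b ≠ a → ∀ y ∈ SB B b,
        Ranking.pref rr x y)
        = ∑ i, if (∃ x ∈ SB B a, ∀ b ∈ B, b ≠ a → ∀ y ∈ SB B b,
            Ranking.pref (rk i) x y) then w i else 0 := by
      simp only [probOf, hμ]
      have step : ∀ t : Ranking 𝒳,
          (if (∃ x ∈ SB B a, ∀ b ∈ B, b ≠ a → ∀ y ∈ SB B b, Ranking.pref t x y)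
            then ∑ i, if t = rk i then w i else 0 else 0)
          = ∑ i, if t = rk i then
              (if (∃ x ∈ SB B a, ∀ b ∈ B, b ≠ a → ∀ y ∈ SB B b, Ranking.pref t x y)
                then w i else 0) else 0 := by
        intro t
        split_ifs with h
        · refine Finset.sum_congr rfl fun i _ => ?_
          simp [h]
        · simp [h]
      simp only [step]
      rw [Finset.sum_comm]
      refine Finset.sum_congr rfl fun i _ => ?_
      rw [Finset.sum_ite_eq' Finset.univ (rk i)
        (fun t => if (∃ x ∈ SB B a, ∀ b ∈ B, b ≠ a → ∀ y ∈ SB B b, Ranking.pref t x y)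
          then w i else 0)]
      simp
    show (∑ i, w i * vertexSCF a0 (r i) (E i) B a) = _
    rw [h1, h2]
    refine Finset.sum_congr rfl fun i _ => ?_
    rw [hcore i B hBne a haB, mul_ite, mul_one, mul_zero]
end
end

section
/- Assume 𝒳 has at least |𝒜_A| + 2|𝒜_N| elements (so that an aggregation correspondence exists). A stochastic choice function ρ is rationalized by some pair (μ,λ), for some aggregation correspondence X, with μ non-overlapping, if and only if ρ is ARU-rational. -/
open Finset

noncomputable section

set_option linter.unusedSectionVars false
section Aux
variable {T U : Type} [Fintype T] [DecidableEq T]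

private def rankFun (f : T → ℕ) (x : T) : ℕ := (univ.filter fun y => f y < f x).card

private lemma rankFun_lt_card (f : T → ℕ) (x : T) : rankFun f x < Fintype.card T := by
  have h : univ.filter (fun y => f y < f x) ⊂ univ := by
    rw [Finset.filter_ssubset]
    exact ⟨x, mem_univ x, lt_irrefl _⟩
  calc rankFun f x < univ.card := Finset.card_lt_card h
    _ = Fintype.card T := Finset.card_univ

private lemma rankFun_lt (f : T → ℕ) {x y : T} (h : f x < f y) : rankFun f x < rankFun f y := by
  apply Finset.card_lt_card
  rw [Finset.ssubset_iff_of_subset]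
  · exact ⟨x, Finset.mem_filter.2 ⟨mem_univ x, h⟩, by simp⟩
  · intro z hz
    simp only [mem_filter, mem_univ, true_and] at hz ⊢
    exact hz.trans h

private def rankingOfKey (f : T → ℕ) (hf : Function.Injective f) : Ranking T :=
  Equiv.ofBijective (fun x => (⟨rankFun f x, rankFun_lt_card f x⟩ : Fin (Fintype.card T)))
    ((Fintype.bijective_iff_injective_and_card _).2
      ⟨by
        intro x y h
        by_contra hxy
        rcases lt_or_gt_of_ne (fun hfe : f x = f y => hxy (hf hfe)) with h' | h'
        · exact absurd (congrArg Fin.val h) (ne_of_lt (rankFun_lt f h'))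
        · exact absurd (congrArg Fin.val h).symm (ne_of_lt (rankFun_lt f h')), by simp⟩)

private lemma rankingOfKey_pref {f : T → ℕ} (hf : Function.Injective f) (x y : T) :
    (rankingOfKey f hf).pref x y ↔ f x < f y := by
  have hpref : (rankingOfKey f hf).pref x y ↔ rankFun f x < rankFun f y := by
    simp [Ranking.pref, rankingOfKey, Fin.lt_def]
  rw [hpref]
  constructor
  · intro h
    by_contra hle
    push_neg at hle
    rcases eq_or_lt_of_le hle with he | hlt
    · cases hf he.symm; exact lt_irrefl _ h
    · exact absurd h (not_lt.2 (le_of_lt (rankFun_lt f hlt)))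
  · exact rankFun_lt f

variable [Fintype U]

open Classical in
private def push (g : T → U) (μ : T → ℝ) : U → ℝ :=
  fun u => ∑ t ∈ univ.filter fun t => g t = u, μ t

private lemma push_distr (g : T → U) {μ : T → ℝ} (hμ : IsDistr μ) : IsDistr (push g μ) := by
  classical
  constructor
  · intro u; exact Finset.sum_nonneg fun t _ => hμ.1 t
  · rw [← hμ.2]
    exact Finset.sum_fiberwise_of_maps_to (fun t _ => mem_univ (g t)) μ

private lemma push_ne_zero {g : T → U} {μ : T → ℝ} {u : U} (h : push g μ u ≠ 0) :
    ∃ t, g t = u := by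
  by_contra hc
  push_neg at hc
  apply h
  unfold push
  rw [Finset.sum_filter]
  exact Finset.sum_eq_zero fun t _ => if_neg (hc t)

open Classical in
private lemma probOf_push (g : T → U) (μ : T → ℝ) (P : U → Prop) :
    probOf (push g μ) P = ∑ t, if P (g t) then μ t else 0 := by
  unfold probOf push
  rw [← Finset.sum_fiberwise_of_maps_to (fun t (_ : t ∈ univ) => mem_univ (g t))
      (fun t => if P (g t) then μ t else 0)]
  refine Finset.sum_congr rfl fun u _ => ?_
  by_cases hP : P u
  · rw [if_pos hP]
    refine Finset.sum_congr rfl fun t ht => ?_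
    rw [if_pos (by rw [(Finset.mem_filter.1 ht).2]; exact hP)]
  · rw [if_neg hP]
    refine (Finset.sum_eq_zero fun t ht => ?_).symm
    rw [if_neg (by rw [(Finset.mem_filter.1 ht).2]; exact hP)]

end Aux

private lemma backward_dir {A 𝒳 : Type} [Fintype A] [DecidableEq A] [Fintype 𝒳] [DecidableEq 𝒳]
    (AN : Finset A) (𝒟 : Finset (Finset A))
    (hX : (ANᶜ : Finset A).card + 2 * AN.card ≤ Fintype.card 𝒳)
    (ρ : Finset A → A → ℝ) (h : ARURational 𝒟 ρ) :
    ∃ Xc : AggCorr A 𝒳 AN, ∃ μ lam, Rationalizes Xc 𝒟 μ lam ρ ∧ NonOverlapping Xc μ := by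
  classical
  obtain ⟨μA, hμA, hARU⟩ := h
  set n : A → ℕ := fun a => if a ∈ AN then 2 else 1 with hn
  have hn2 : ∀ a, n a ≤ 2 := fun a => by simp only [hn]; split <;> omega
  have hn1 : ∀ a, 1 ≤ n a := fun a => by simp only [hn]; split <;> omega
  have hcard : Fintype.card (Σ a : A, Fin (n a)) ≤ Fintype.card 𝒳 := by
    rw [Fintype.card_sigma]
    refine le_trans (le_of_eq ?_) hX
    simp only [Fintype.card_fin, hn]
    rw [Finset.sum_ite, Finset.sum_const, Finset.sum_const, smul_eq_mul, smul_eq_mul, mul_one]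
    have h1 : univ.filter (fun a => a ∈ AN) = AN := by ext a; simp
    have h2 : univ.filter (fun a => ¬ a ∈ AN) = ANᶜ := by ext a; simp
    rw [h1, h2]
    omega
  obtain ⟨g⟩ : Nonempty ((Σ a : A, Fin (n a)) ↪ 𝒳) :=
    Function.Embedding.nonempty_of_card_le hcard
  set X : A → Finset 𝒳 := fun a => (univ : Finset (Fin (n a))).image fun i => g ⟨a, i⟩
    with hXdef
  have hmemX : ∀ (a) (i : Fin (n a)), g ⟨a, i⟩ ∈ X a := fun a i =>
    Finset.mem_image_of_mem _ (mem_univ i)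
  have hXmem : ∀ a x, x ∈ X a → ∃ i : Fin (n a), g ⟨a, i⟩ = x := by
    intro a x hx
    obtain ⟨i, _, hi⟩ := Finset.mem_image.1 hx
    exact ⟨i, hi⟩
  have hXcard : ∀ a, (X a).card = n a := by
    intro a
    rw [hXdef]
    rw [Finset.card_image_of_injective _ (fun i j hij => sigma_mk_injective (g.injective hij))]
    simp
  have hdisj : ∀ a b, a ≠ b → Disjoint (X a) (X b) := by
    intro a b hab
    rw [Finset.disjoint_left]
    intro x hxa hxb
    obtain ⟨i, hi⟩ := hXmem a x hxa
    obtain ⟨j, hj⟩ := hXmem b x hxb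
    exact hab (congrArg Sigma.fst (g.injective (hi.trans hj.symm)))
  set Xc : AggCorr A 𝒳 AN :=
    ⟨X, hdisj, fun a ha => by rw [hXcard]; simp [hn, ha],
      fun a ha => by rw [hXcard]; simp [hn, ha]⟩ with hXc
  set key : Ranking A → 𝒳 → ℕ := fun rA x =>
    if h : ∃ p : Σ a : A, Fin (n a), g p = x then
      2 * ((rA h.choose.1 : ℕ)) + (h.choose.2 : ℕ)
    else 2 * Fintype.card A + ((Fintype.equivFin 𝒳) x : ℕ) with hkey
  have hkeyg : ∀ rA (a) (i : Fin (n a)), key rA (g ⟨a, i⟩) = 2 * (rA a : ℕ) + (i : ℕ) := by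
    intro rA a i
    have hex : ∃ p : Σ a : A, Fin (n a), g p = g ⟨a, i⟩ := ⟨⟨a, i⟩, rfl⟩
    simp only [hkey]
    rw [dif_pos hex]
    have hce : hex.choose = ⟨a, i⟩ := g.injective hex.choose_spec
    rw [hce]
  have hkey_mem : ∀ rA a, ∀ x ∈ X a,
      2 * (rA a : ℕ) ≤ key rA x ∧ key rA x ≤ 2 * (rA a : ℕ) + 1 := by
    intro rA a x hx
    obtain ⟨i, rfl⟩ := hXmem a x hx
    rw [hkeyg]
    have h2 := hn2 a
    have h3 := i.2
    omega
  have hkey_inj : ∀ rA, Function.Injective (key rA) := by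
    intro rA x y hxy
    by_cases hx : ∃ p : Σ a : A, Fin (n a), g p = x
    · obtain ⟨⟨a, i⟩, rfl⟩ := hx
      by_cases hy : ∃ p : Σ a : A, Fin (n a), g p = y
      · obtain ⟨⟨b, j⟩, rfl⟩ := hy
        rw [hkeyg, hkeyg] at hxy
        have hia : (i : ℕ) < 2 := lt_of_lt_of_le i.2 (hn2 a)
        have hjb : (j : ℕ) < 2 := lt_of_lt_of_le j.2 (hn2 b)
        have h1 : (rA a : ℕ) = (rA b : ℕ) ∧ (i : ℕ) = (j : ℕ) := by omega
        have hab : a = b := rA.injective (Fin.val_injective h1.1)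
        subst hab
        have hij : i = j := Fin.val_injective h1.2
        rw [hij]
      · exfalso
        rw [hkeyg] at hxy
        simp only [hkey] at hxy
        rw [dif_neg hy] at hxy
        have h1 := (rA a).2
        have h2 : (i : ℕ) < 2 := lt_of_lt_of_le i.2 (hn2 a)
        omega
    · by_cases hy : ∃ p : Σ a : A, Fin (n a), g p = y
      · obtain ⟨⟨b, j⟩, rfl⟩ := hy
        exfalso
        rw [hkeyg] at hxy
        simp only [hkey] at hxy
        rw [dif_neg hx] at hxy
        have h1 := (rA b).2
        have h2 : (j : ℕ) < 2 := lt_of_lt_of_le j.2 (hn2 b)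
        omega
      · simp only [hkey] at hxy
        rw [dif_neg hx, dif_neg hy] at hxy
        exact (Fintype.equivFin 𝒳).injective (Fin.val_injective (by omega))
  set R : Ranking A → Ranking 𝒳 := fun rA => rankingOfKey (key rA) (hkey_inj rA) with hR
  have hRpref : ∀ rA x y, (R rA).pref x y ↔ key rA x < key rA y := fun rA x y => by
    rw [hR]; exact rankingOfKey_pref _ x y
  have hevent : ∀ (rA : Ranking A) (B : Finset A), ∀ a ∈ B,
      ((∃ x ∈ Xc.X a, ∀ b ∈ B, b ≠ a → ∀ y ∈ Xc.X b, Ranking.pref (R rA) x y) ↔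
        ∀ b ∈ B, b ≠ a → Ranking.pref rA a b) := by
    intro rA B a ha
    constructor
    · rintro ⟨x, hx, hbest⟩ b hb hba
      have hy : g ⟨b, ⟨0, hn1 b⟩⟩ ∈ Xc.X b := hmemX b _
      have h1 := (hRpref rA x _).1 (hbest b hb hba _ hy)
      rw [hkeyg] at h1
      have h0 : ((⟨0, hn1 b⟩ : Fin (n b)) : ℕ) = 0 := rfl
      rw [h0] at h1
      have h2 := hkey_mem rA a x hx
      have hne : (rA a : ℕ) ≠ (rA b : ℕ) := fun he =>
        hba (rA.injective (Fin.val_injective he)).symm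
      show rA a < rA b
      rw [Fin.lt_def]
      omega
    · intro hQ
      refine ⟨g ⟨a, ⟨0, hn1 a⟩⟩, hmemX a _, ?_⟩
      intro b hb hba y hy
      rw [hRpref, hkeyg]
      have h0 : ((⟨0, hn1 a⟩ : Fin (n a)) : ℕ) = 0 := rfl
      rw [h0]
      have h2 := hkey_mem rA b y hy
      have hab := hQ b hb hba
      rw [Ranking.pref, Fin.lt_def] at hab
      omega
  refine ⟨Xc, push R μA, fun _ S => if S = Xc.X then 1 else 0,
    ⟨push_distr R hμA, ?_, ?_⟩, ?_⟩
  · intro B hB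
    constructor
    · constructor
      · intro S; dsimp only; split <;> norm_num
      · rw [Finset.sum_eq_single_of_mem Xc.X (mem_univ _) (fun S _ hS => if_neg hS)]
        exact if_pos rfl
    · intro S hS a
      have hSX : S = Xc.X := by by_contra hne; exact hS (if_neg hne)
      subst hSX
      refine ⟨Finset.Subset.refl _, Finset.card_pos.1 ?_⟩
      have : Xc.X a = X a := rfl
      rw [this, hXcard]
      exact hn1 a
  · intro B hB a ha
    rw [hARU B hB a ha]
    rw [Finset.sum_eq_single_of_mem Xc.X (mem_univ _)
      (fun S _ hS => by dsimp only; rw [if_neg hS, zero_mul])]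
    dsimp only
    rw [if_pos rfl, one_mul, probOf_push]
    unfold probOf
    refine Finset.sum_congr rfl fun rA _ => ?_
    by_cases hq : ∀ b ∈ B, b ≠ a → rA.pref a b
    · rw [if_pos hq, if_pos ((hevent rA B a ha).2 hq)]
    · rw [if_neg hq, if_neg (fun he => hq ((hevent rA B a ha).1 he))]
  · intro r hr a haAN y hy z hz x hyx hxz
    obtain ⟨rA, hrA⟩ := push_ne_zero hr
    subst hrA
    rw [hRpref] at hyx hxz
    have h1 := hkey_mem rA a y hy
    have h2 := hkey_mem rA a z hz
    exfalso
    omega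

private lemma forward_dir {A 𝒳 : Type} [Fintype A] [DecidableEq A] [Fintype 𝒳] [DecidableEq 𝒳]
    (AN : Finset A) (𝒟 : Finset (Finset A)) (ρ : Finset A → A → ℝ)
    (h : ∃ Xc : AggCorr A 𝒳 AN, ∃ μ lam, Rationalizes Xc 𝒟 μ lam ρ ∧ NonOverlapping Xc μ) :
    ARURational 𝒟 ρ := by
  classical
  obtain ⟨Xc, μ, lam, ⟨hμ, hlam, hrep⟩, hno⟩ := h
  have hXne : ∀ a, (Xc.X a).Nonempty := by
    intro a
    rw [← Finset.card_pos]
    by_cases h : a ∈ AN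
    · exact lt_of_lt_of_le (by norm_num) (Xc.nonatomic a h)
    · rw [Xc.atomic a h]; norm_num
  set pick : A → 𝒳 := fun a => (hXne a).choose with hpick
  have hpick_mem : ∀ a, pick a ∈ Xc.X a := fun a => (hXne a).choose_spec
  have hpick_inj : Function.Injective pick := by
    intro a b hab
    by_contra hne
    exact Finset.disjoint_left.1 (Xc.disj a b hne) (hpick_mem a) (hab ▸ hpick_mem b)
  set I : Ranking 𝒳 → Ranking A := fun r =>
    rankingOfKey (fun a => (r (pick a) : ℕ))
      (fun a b hab => hpick_inj (r.injective (Fin.val_injective hab))) with hI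
  have hIpref : ∀ r a b, (I r).pref a b ↔ r (pick a) < r (pick b) := by
    intro r a b
    refine (rankingOfKey_pref _ a b).trans ?_
    exact Fin.lt_def.symm
  have hint : ∀ r, μ r ≠ 0 → ∀ (a : A), ∀ y ∈ Xc.X a, ∀ z ∈ Xc.X a, ∀ x,
      r y < r x → r x < r z → x ∈ Xc.X a := by
    intro r hr a y hy z hz x h1 h2
    by_cases hAN : a ∈ AN
    · exact hno r hr a hAN y hy z hz x h1 h2
    · exfalso
      have hcard := Xc.atomic a hAN
      have hyz : y = z := by
        rw [Finset.card_eq_one] at hcard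
        obtain ⟨w, hw⟩ := hcard
        rw [hw, Finset.mem_singleton] at hy hz
        rw [hy, hz]
      subst hyz
      exact absurd (h1.trans h2) (lt_irrefl _)
  have huniform : ∀ r, μ r ≠ 0 → ∀ a b, a ≠ b → ∀ u0 ∈ Xc.X a, ∀ v0 ∈ Xc.X b,
      r u0 < r v0 → ∀ u ∈ Xc.X a, ∀ v ∈ Xc.X b, r u < r v := by
    intro r hr a b hab u0 hu0 v0 hv0 h0 u hu v hv
    by_contra hc
    push_neg at hc
    have hne : r v ≠ r u := fun he =>
      Finset.disjoint_left.1 (Xc.disj a b hab) hu ((r.injective he) ▸ hv)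
    have hvu : r v < r u := lt_of_le_of_ne hc hne
    rcases lt_trichotomy (r v) (r u0) with h1 | h1 | h1
    · exact Finset.disjoint_left.1 (Xc.disj a b hab) hu0
        (hint r hr b v hv v0 hv0 u0 h1 h0)
    · exact Finset.disjoint_left.1 (Xc.disj a b hab) hu0 ((r.injective h1) ▸ hv)
    · exact Finset.disjoint_left.1 (Xc.disj a b hab)
        (hint r hr a u0 hu0 u hu v h1 hvu) hv
  have hevent : ∀ r : Ranking 𝒳, μ r ≠ 0 → ∀ (B : Finset A) (a : A), a ∈ B →
      ∀ S : A → Finset 𝒳, (∀ c, S c ⊆ Xc.X c ∧ (S c).Nonempty) →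
      ((∃ x ∈ S a, ∀ b ∈ B, b ≠ a → ∀ y ∈ S b, Ranking.pref r x y) ↔
        ∀ b ∈ B, b ≠ a → r (pick a) < r (pick b)) := by
    intro r hr B a ha S hS
    constructor
    · rintro ⟨x, hxS, hbest⟩ b hb hba
      obtain ⟨y, hyS⟩ := (hS b).2
      have hxy : r x < r y := hbest b hb hba y hyS
      by_contra hc
      push_neg at hc
      have hne : r (pick b) ≠ r (pick a) := fun he => hba (hpick_inj (r.injective he))
      have hlt : r (pick b) < r (pick a) := lt_of_le_of_ne hc hne
      exact absurd (huniform r hr b a hba (pick b) (hpick_mem b) (pick a) (hpick_mem a) hlt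
        y ((hS b).1 hyS) x ((hS a).1 hxS)) (not_lt.2 (le_of_lt hxy))
    · intro hQ
      obtain ⟨x, hxS⟩ := (hS a).2
      refine ⟨x, hxS, ?_⟩
      intro b hb hba y hyS
      exact huniform r hr a b (fun he => hba he.symm) (pick a) (hpick_mem a) (pick b)
        (hpick_mem b) (hQ b hb hba) x ((hS a).1 hxS) y ((hS b).1 hyS)
  refine ⟨push I μ, push_distr I hμ, ?_⟩
  intro B hB a ha
  rw [hrep B hB a ha, probOf_push]
  have hterm : ∀ S : A → Finset 𝒳,
      lam B S * probOf μ (fun r => ∃ x ∈ S a, ∀ b ∈ B, b ≠ a → ∀ y ∈ S b, Ranking.pref r x y)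
      = lam B S * probOf μ (fun r => ∀ b ∈ B, b ≠ a → Ranking.pref (I r) a b) := by
    intro S
    by_cases h0 : lam B S = 0
    · rw [h0, zero_mul, zero_mul]
    · congr 1
      unfold probOf
      refine Finset.sum_congr rfl fun r _ => ?_
      by_cases hr : μ r = 0
      · rw [hr, ite_self, ite_self]
      · have hiff : (∃ x ∈ S a, ∀ b ∈ B, b ≠ a → ∀ y ∈ S b, Ranking.pref r x y) ↔
            (∀ b ∈ B, b ≠ a → Ranking.pref (I r) a b) := by
          rw [hevent r hr B a ha S ((hlam B hB).2 S h0)]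
          exact ⟨fun h b hb hba => (hIpref r a b).2 (h b hb hba),
                 fun h b hb hba => (hIpref r a b).1 (h b hb hba)⟩
        by_cases hq : ∀ b ∈ B, b ≠ a → Ranking.pref (I r) a b
        · rw [if_pos (hiff.2 hq), if_pos hq]
        · rw [if_neg (fun he => hq (hiff.1 he)), if_neg hq]
  rw [Finset.sum_congr rfl fun S _ => hterm S, ← Finset.sum_mul, (hlam B hB).1.2, one_mul]
  rfl

/-- **Proposition 4.1**: `ρ` is rationalized by some pair `(μ, λ)` with `μ` non-overlapping
iff `ρ` is ARU-rational. -/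
theorem stmt11 {A 𝒳 : Type} [Fintype A] [DecidableEq A] [Fintype 𝒳] [DecidableEq 𝒳]
    (AN : Finset A) (𝒟 : Finset (Finset A)) (h𝒟 : ∀ B ∈ 𝒟, B.Nonempty)
    (hX : (ANᶜ : Finset A).card + 2 * AN.card ≤ Fintype.card 𝒳)
    (ρ : Finset A → A → ℝ) (hρ : IsSCF 𝒟 ρ) :
    (∃ Xc : AggCorr A 𝒳 AN, ∃ μ lam,
        Rationalizes Xc 𝒟 μ lam ρ ∧ NonOverlapping Xc μ) ↔ ARURational 𝒟 ρ := by
  constructor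
  · exact forward_dir AN 𝒟 ρ
  · exact backward_dir AN 𝒟 hX ρ
end
end

section
/- Assume 𝒳 has at least |𝒜_A| + 2|𝒜_N| elements (so that an aggregation correspondence exists). A stochastic choice function ρ is rationalized by some pair (μ,λ), for some aggregation correspondence X, with λ menu-independent, if and only if ρ is ARU-rational. -/
open Finset

noncomputable section

section auxlemmas

section rankof
variable {T U : Type} [Fintype T] [DecidableEq T] [Fintype U]

omit [DecidableEq T] in
lemma aux_image_card (g : T → ℕ) (hg : Function.Injective g) :
    (Finset.univ.image g).card = Fintype.card T := by
  rw [Finset.card_image_of_injective _ hg, Finset.card_univ]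

def auxToImage (g : T → ℕ) (hg : Function.Injective g) :
    T ≃ (Finset.univ.image g : Finset ℕ) :=
  Equiv.ofBijective (fun x => ⟨g x, Finset.mem_image_of_mem g (Finset.mem_univ x)⟩)
    ((Fintype.bijective_iff_injective_and_card _).2
      ⟨fun x y h => hg (congrArg Subtype.val h), by
        rw [Fintype.card_coe, aux_image_card g hg]⟩)

/-- ranking induced by an injective numeric key: lower key = better (lower index). -/
def auxRankOf (g : T → ℕ) (hg : Function.Injective g) : Ranking T :=
  (auxToImage g hg).trans
    ((Finset.univ.image g).orderIsoOfFin (aux_image_card g hg)).toEquiv.symm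

lemma auxRankOf_lt_iff (g : T → ℕ) (hg : Function.Injective g) (x y : T) :
    auxRankOf g hg x < auxRankOf g hg y ↔ g x < g y := by
  unfold auxRankOf auxToImage
  simp only [Equiv.trans_apply, Equiv.ofBijective_apply]
  rw [show (((Finset.univ.image g).orderIsoOfFin (aux_image_card g hg)).toEquiv.symm) =
    (((Finset.univ.image g).orderIsoOfFin (aux_image_card g hg)).symm : _ ≃ _) from rfl]
  constructor
  · intro h
    have := (((Finset.univ.image g).orderIsoOfFin (aux_image_card g hg)).symm.lt_iff_lt).1 h
    exact this
  · intro h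
    exact (((Finset.univ.image g).orderIsoOfFin (aux_image_card g hg)).symm.lt_iff_lt).2 h

lemma aux_best_mem (r : Ranking T) (D : Finset T) (hD : D.Nonempty) : r.best D hD ∈ D := by
  unfold Ranking.best
  have h := Finset.min'_mem (D.image fun x => r x) (hD.image fun x => r x)
  obtain ⟨x, hx, hx2⟩ := Finset.mem_image.1 h
  rw [← hx2, Equiv.symm_apply_apply]; exact hx

lemma aux_best_le (r : Ranking T) (D : Finset T) (hD : D.Nonempty) {y : T} (hy : y ∈ D) :
    r (r.best D hD) ≤ r y := by
  unfold Ranking.best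
  rw [Equiv.apply_symm_apply]
  exact Finset.min'_le _ _ (Finset.mem_image_of_mem _ hy)

omit [DecidableEq T] in
lemma aux_probOf_congr (μ : T → ℝ) {P Q : T → Prop} (h : ∀ t, P t ↔ Q t) :
    probOf μ P = probOf μ Q := by
  classical
  unfold probOf
  exact Finset.sum_congr rfl fun t _ => if_congr (h t) rfl rfl

open Classical in
omit [DecidableEq T] in
lemma aux_probOf_push [DecidableEq U] (μ : T → ℝ) (f : T → U) (P : U → Prop) :
    probOf (fun u => ∑ t, if f t = u then μ t else 0) P = probOf μ (fun t => P (f t)) := by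
  unfold probOf
  have step : ∀ u : U, (if P u then (∑ t, if f t = u then μ t else 0) else 0)
      = ∑ t, if f t = u then (if P u then μ t else 0) else 0 := by
    intro u
    split
    · exact Finset.sum_congr rfl fun t _ => by split <;> simp
    · simp
  rw [Finset.sum_congr rfl fun u _ => step u, Finset.sum_comm]
  refine Finset.sum_congr rfl fun t _ => ?_
  rw [Finset.sum_ite_eq Finset.univ (f t) (fun u => if P u then μ t else 0)]
  simp

open Classical in
omit [DecidableEq T] in
lemma aux_sum_pushforward [DecidableEq U] (μ : T → ℝ) (f : T → U) :
    ∑ u, (∑ t, if f t = u then μ t else 0) = ∑ t, μ t := by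
  rw [Finset.sum_comm]
  refine Finset.sum_congr rfl fun t _ => ?_
  rw [Finset.sum_ite_eq Finset.univ (f t) (fun _ => μ t)]
  simp

end rankof

section phiext
variable {A X : Type} [Fintype A] [DecidableEq A] [Fintype X] [DecidableEq X]

open Classical in
lemma aux_sum_mul_marginal (B : Finset A) (ν ν' F : (A → Finset X) → ℝ)
    (hm : ∀ S0 : A → Finset X, probOf ν (fun S => ∀ b ∈ B, S b = S0 b)
        = probOf ν' (fun S => ∀ b ∈ B, S b = S0 b))
    (hF : ∀ S S' : A → Finset X, (∀ b ∈ B, S b = S' b) → F S = F S') :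
    ∑ S, ν S * F S = ∑ S, ν' S * F S := by
  set e : (A → Finset X) → (A → Finset X) := fun S a => if a ∈ B then S a else ∅ with he
  have hee : ∀ S, e (e S) = e S := by
    intro S; funext a; by_cases h : a ∈ B <;> simp [e, h]
  have hagree : ∀ S : A → Finset X, ∀ b ∈ B, S b = e S b := by
    intro S b hb; simp [e, hb]
  have key : ∀ ν0 : (A → Finset X) → ℝ, ∑ S, ν0 S * F S
      = ∑ S0, if e S0 = S0 then probOf ν0 (fun S => ∀ b ∈ B, S b = S0 b) * F S0 else 0 := by
    intro ν0
    have h1 : ∑ S, ν0 S * F S = ∑ S, ν0 S * F (e S) :=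
      Finset.sum_congr rfl fun S _ => by rw [hF S (e S) (hagree S)]
    rw [h1, ← Finset.sum_fiberwise Finset.univ e (fun S => ν0 S * F (e S))]
    refine Finset.sum_congr rfl fun S0 _ => ?_
    by_cases h0 : e S0 = S0
    · rw [if_pos h0]
      rw [Finset.sum_congr rfl (fun S hS => by
        rw [(Finset.mem_filter.1 hS).2] :
        ∀ S ∈ Finset.univ.filter (fun S => e S = S0), ν0 S * F (e S) = ν0 S * F S0)]
      rw [← Finset.sum_mul]
      congr 1
      rw [probOf, Finset.sum_filter]
      refine Finset.sum_congr rfl fun S _ => ?_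
      have hiff : (e S = S0) ↔ (∀ b ∈ B, S b = S0 b) := by
        constructor
        · intro h b hb; rw [← h]; simp [e, hb]
        · intro h; funext a
          by_cases ha : a ∈ B
          · simpa [e, ha] using (h a ha)
          · rw [← h0]; simp [e, ha]
      by_cases h2 : ∀ b ∈ B, S b = S0 b
      · rw [if_pos h2, if_pos (hiff.2 h2)]
      · rw [if_neg h2, if_neg (fun hc => h2 (hiff.1 hc))]
    · rw [if_neg h0]
      apply Finset.sum_eq_zero
      intro S hS
      exfalso; apply h0
      have hES : e S = S0 := (Finset.mem_filter.1 hS).2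
      rw [← hES]; exact hee S
  rw [key ν, key ν']
  refine Finset.sum_congr rfl fun S0 _ => ?_
  by_cases h0 : e S0 = S0 <;> simp [h0, hm S0]

open Classical in
def auxPhi (S : A → Finset X) (r : Ranking X) : Ranking A :=
  if h : ∀ a, (S a).Nonempty then
    if hg : Function.Injective (fun a => (r (Ranking.best r (S a) (h a))).val)
    then auxRankOf _ hg else Fintype.equivFin A
  else Fintype.equivFin A

lemma auxPhi_lt_iff (S : A → Finset X) (r : Ranking X) (h : ∀ a, (S a).Nonempty)
    (hg : Function.Injective (fun a => (r (Ranking.best r (S a) (h a))).val)) (a b : A) :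
    auxPhi S r a < auxPhi S r b ↔
      r (Ranking.best r (S a) (h a)) < r (Ranking.best r (S b) (h b)) := by
  rw [auxPhi, dif_pos h, dif_pos hg, auxRankOf_lt_iff]
  exact Fin.lt_def.symm

open Classical in
def auxExt (pick : A → X) (e0 : X ≃ Fin (Fintype.card X)) (rA : Ranking A) (x : X) : ℕ :=
  if h : ∃ a, pick a = x then (rA (Classical.choose h)).val
  else Fintype.card A + (e0 x).val

lemma auxExt_pick (pick : A → X) (e0 : X ≃ Fin (Fintype.card X))
    (hp : Function.Injective pick) (rA : Ranking A) (a : A) :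
    auxExt pick e0 rA (pick a) = (rA a).val := by
  have h : ∃ a', pick a' = pick a := ⟨a, rfl⟩
  rw [auxExt, dif_pos h, hp (Classical.choose_spec h)]

lemma auxExt_inj (pick : A → X) (e0 : X ≃ Fin (Fintype.card X)) (rA : Ranking A) :
    Function.Injective (auxExt pick e0 rA) := by
  intro x y hxy
  rw [auxExt, auxExt] at hxy
  by_cases hx : ∃ a, pick a = x <;> by_cases hy : ∃ a, pick a = y
  · rw [dif_pos hx, dif_pos hy] at hxy
    have h1 : Classical.choose hx = Classical.choose hy := rA.injective (Fin.val_inj.1 hxy)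
    rw [← Classical.choose_spec hx, ← Classical.choose_spec hy, h1]
  · rw [dif_pos hx, dif_neg hy] at hxy
    have := (rA (Classical.choose hx)).isLt
    omega
  · rw [dif_neg hx, dif_pos hy] at hxy
    have := (rA (Classical.choose hy)).isLt
    omega
  · rw [dif_neg hx, dif_neg hy] at hxy
    exact e0.injective (Fin.val_inj.1 (by omega))

end phiext

section auxXsec
variable {A B : Type} [DecidableEq A] [DecidableEq B] (AN : Finset A)
  (f : (A ⊕ {a : A // a ∈ AN}) → B)

def auxX (a : A) : Finset B :=
  if ha : a ∈ AN then {f (Sum.inl a), f (Sum.inr ⟨a, ha⟩)} else {f (Sum.inl a)}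

lemma auxX_mem (a : A) : f (Sum.inl a) ∈ auxX AN f a := by
  unfold auxX; split
  · exact Finset.mem_insert_self _ _
  · exact Finset.mem_singleton_self _

lemma auxX_elim {a : A} {x : B} (hx : x ∈ auxX AN f a) :
    x = f (Sum.inl a) ∨ ∃ ha : a ∈ AN, x = f (Sum.inr ⟨a, ha⟩) := by
  by_cases ha : a ∈ AN
  · rw [auxX, dif_pos ha] at hx
    rcases Finset.mem_insert.1 hx with h | h
    · exact Or.inl h
    · exact Or.inr ⟨ha, Finset.mem_singleton.1 h⟩
  · rw [auxX, dif_neg ha] at hx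
    exact Or.inl (Finset.mem_singleton.1 hx)

lemma auxX_disj (hf : Function.Injective f) (a b : A) (hab : a ≠ b) :
    Disjoint (auxX AN f a) (auxX AN f b) := by
  rw [Finset.disjoint_left]
  intro x hxa hxb
  rcases auxX_elim AN f hxa with h1 | ⟨ha, h1⟩ <;> rcases auxX_elim AN f hxb with h2 | ⟨hb, h2⟩
  · have : f (Sum.inl a) = f (Sum.inl b) := by rw [← h1, ← h2]
    exact hab (Sum.inl.inj (hf this))
  · have : f (Sum.inl a) = f (Sum.inr ⟨b, hb⟩) := by rw [← h1, ← h2]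
    exact absurd (hf this) (by simp)
  · have : f (Sum.inr ⟨a, ha⟩) = f (Sum.inl b) := by rw [← h1, ← h2]
    exact absurd (hf this) (by simp)
  · have h3 : f (Sum.inr ⟨a, ha⟩) = f (Sum.inr ⟨b, hb⟩) := by rw [← h1, ← h2]
    have h4 := hf h3
    simp at h4
    exact hab h4

lemma auxX_card_atomic {a : A} (ha : a ∉ AN) : (auxX AN f a).card = 1 := by
  rw [auxX, dif_neg ha]; exact Finset.card_singleton _

lemma auxX_card_nonatomic (hf : Function.Injective f) {a : A} (ha : a ∈ AN) :
    (auxX AN f a).card = 2 := by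
  rw [auxX, dif_pos ha]
  refine Finset.card_pair fun h => ?_
  have := hf h
  simp at this

end auxXsec

end auxlemmas

/-- **Proposition 4.2**: `ρ` is rationalized by some pair `(μ, λ)` with `λ` menu-independent
iff `ρ` is ARU-rational. -/
theorem stmt12 {A 𝒳 : Type} [Fintype A] [DecidableEq A] [Fintype 𝒳] [DecidableEq 𝒳]
    (AN : Finset A) (𝒟 : Finset (Finset A)) (h𝒟 : ∀ B ∈ 𝒟, B.Nonempty)
    (hX : (ANᶜ : Finset A).card + 2 * AN.card ≤ Fintype.card 𝒳)
    (ρ : Finset A → A → ℝ) (hρ : IsSCF 𝒟 ρ) :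
    (∃ Xc : AggCorr A 𝒳 AN, ∃ μ lam,
        Rationalizes Xc 𝒟 μ lam ρ ∧ MenuIndependent Xc 𝒟 lam) ↔ ARURational 𝒟 ρ := by
  classical
  constructor
  · rintro ⟨Xc, μ, lam, ⟨hμ, hlam, heq⟩, lamBar, hlB, hlBsupp, hmarg⟩
    refine ⟨fun rA => ∑ S : A → Finset 𝒳, ∑ r : Ranking 𝒳,
        if auxPhi S r = rA then lamBar S * μ r else 0, ⟨?_, ?_⟩, ?_⟩
    · intro rA
      apply Finset.sum_nonneg; intro S _
      apply Finset.sum_nonneg; intro r _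
      split
      · exact mul_nonneg (hlB.1 S) (hμ.1 r)
      · exact le_refl 0
    · rw [Finset.sum_comm]
      have inner : ∀ S : A → Finset 𝒳,
          (∑ rA : Ranking A, ∑ r : Ranking 𝒳, if auxPhi S r = rA then lamBar S * μ r else 0)
          = lamBar S := by
        intro S
        rw [Finset.sum_comm]
        have h3 : ∀ r : Ranking 𝒳,
            (∑ rA : Ranking A, if auxPhi S r = rA then lamBar S * μ r else 0)
            = lamBar S * μ r := by
          intro r
          rw [Finset.sum_ite_eq Finset.univ (auxPhi S r) (fun _ => lamBar S * μ r)]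
          simp
        rw [Finset.sum_congr rfl fun r _ => h3 r, ← Finset.mul_sum, hμ.2, mul_one]
      rw [Finset.sum_congr rfl fun S _ => inner S, hlB.2]
    · intro B hB a ha
      have hFagree : ∀ S S' : A → Finset 𝒳, (∀ b ∈ B, S b = S' b) →
          (probOf μ fun r => ∃ x ∈ S a, ∀ b ∈ B, b ≠ a → ∀ y ∈ S b, Ranking.pref r x y)
          = (probOf μ fun r => ∃ x ∈ S' a, ∀ b ∈ B, b ≠ a → ∀ y ∈ S' b, Ranking.pref r x y) := by
        intro S S' hSS'
        apply aux_probOf_congr μ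
        intro r
        constructor
        · rintro ⟨x, hx, hall⟩
          refine ⟨x, by rw [← hSS' a ha]; exact hx, fun b hb hba y hy =>
            hall b hb hba y (by rw [hSS' b hb]; exact hy)⟩
        · rintro ⟨x, hx, hall⟩
          refine ⟨x, by rw [hSS' a ha]; exact hx, fun b hb hba y hy =>
            hall b hb hba y (by rw [← hSS' b hb]; exact hy)⟩
      have step1 : ρ B a = ∑ S : A → Finset 𝒳, lamBar S *
          probOf μ (fun r => ∃ x ∈ S a, ∀ b ∈ B, b ≠ a → ∀ y ∈ S b, Ranking.pref r x y) := by
        rw [heq B hB a ha]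
        exact aux_sum_mul_marginal B (lam B) lamBar _ (hmarg B hB) hFagree
      rw [step1, probOf]
      have expand : ∀ S : A → Finset 𝒳, lamBar S *
          probOf μ (fun r => ∃ x ∈ S a, ∀ b ∈ B, b ≠ a → ∀ y ∈ S b, Ranking.pref r x y)
          = ∑ r : Ranking 𝒳, if (∃ x ∈ S a, ∀ b ∈ B, b ≠ a → ∀ y ∈ S b, Ranking.pref r x y)
              then lamBar S * μ r else 0 := by
        intro S
        rw [probOf, Finset.mul_sum]
        exact Finset.sum_congr rfl fun r _ => by split <;> simp
      rw [Finset.sum_congr rfl fun S _ => expand S]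
      symm
      trans (∑ rA : Ranking A, ∑ S : A → Finset 𝒳, ∑ r : Ranking 𝒳,
          if auxPhi S r = rA then
            (if (∀ b ∈ B, b ≠ a → Ranking.pref rA a b) then lamBar S * μ r else 0) else 0)
      · refine Finset.sum_congr rfl fun rA _ => ?_
        by_cases hc : ∀ b ∈ B, b ≠ a → Ranking.pref rA a b
        · rw [if_pos hc]
          refine Finset.sum_congr rfl fun S _ => Finset.sum_congr rfl fun r _ => ?_
          rw [if_pos hc]
        · rw [if_neg hc]
          symm
          apply Finset.sum_eq_zero; intro S _
          apply Finset.sum_eq_zero; intro r _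
          rw [if_neg hc]
          simp
      · rw [Finset.sum_comm]
        refine Finset.sum_congr rfl fun S _ => ?_
        rw [Finset.sum_comm]
        refine Finset.sum_congr rfl fun r _ => ?_
        rw [Finset.sum_eq_single (auxPhi S r)
          (fun b' _ hb' => if_neg (fun h => hb' h.symm))
          (fun h => absurd (Finset.mem_univ _) h), if_pos rfl]
        by_cases hS0 : lamBar S = 0
        · simp [hS0]
        · have hsupp := hlBsupp S hS0
          have h1 : ∀ c, (S c).Nonempty := fun c => (hsupp c).2
          have hg : Function.Injective
              (fun c => ((r (Ranking.best r (S c) (h1 c))) : Fin _).val) := by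
            intro c d hcd
            have hbe : Ranking.best r (S c) (h1 c) = Ranking.best r (S d) (h1 d) :=
              r.injective (Fin.val_inj.1 hcd)
            by_contra hne
            have hm1 : Ranking.best r (S c) (h1 c) ∈ Xc.X c :=
              (hsupp c).1 (aux_best_mem r (S c) (h1 c))
            have hm2 : Ranking.best r (S c) (h1 c) ∈ Xc.X d := by
              rw [hbe]; exact (hsupp d).1 (aux_best_mem r (S d) (h1 d))
            exact Finset.disjoint_left.1 (Xc.disj c d hne) hm1 hm2
          have hiff : (∃ x ∈ S a, ∀ b ∈ B, b ≠ a → ∀ y ∈ S b, Ranking.pref r x y)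
              ↔ (∀ b ∈ B, b ≠ a → Ranking.pref (auxPhi S r) a b) := by
            constructor
            · rintro ⟨x, hx, hall⟩ b hb hba
              have h2 : r (Ranking.best r (S a) (h1 a)) ≤ r x := aux_best_le r (S a) (h1 a) hx
              have h3 : r x < r (Ranking.best r (S b) (h1 b)) :=
                hall b hb hba _ (aux_best_mem r (S b) (h1 b))
              exact (auxPhi_lt_iff S r h1 hg a b).2 (lt_of_le_of_lt h2 h3)
            · intro hall
              refine ⟨Ranking.best r (S a) (h1 a), aux_best_mem r (S a) (h1 a), ?_⟩
              intro b hb hba y hy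
              have h2 := (auxPhi_lt_iff S r h1 hg a b).1 (hall b hb hba)
              exact lt_of_lt_of_le h2 (aux_best_le r (S b) (h1 b) hy)
          by_cases hev : ∃ x ∈ S a, ∀ b ∈ B, b ≠ a → ∀ y ∈ S b, Ranking.pref r x y
          · rw [if_pos hev, if_pos (hiff.1 hev)]
          · rw [if_neg hev, if_neg (fun hc2 => hev (hiff.2 hc2))]
  · rintro ⟨μA, hμA, hARU⟩
    -- build the embedding
    have hcards : Fintype.card (A ⊕ {a : A // a ∈ AN}) ≤ Fintype.card 𝒳 := by
      rw [Fintype.card_sum, Fintype.card_coe]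
      have h2 := Finset.card_add_card_compl AN
      omega
    obtain ⟨f⟩ := Function.Embedding.nonempty_of_card_le hcards
    have hfinj : Function.Injective (f : (A ⊕ {a : A // a ∈ AN}) → 𝒳) := f.injective
    set pick : A → 𝒳 := fun a => f (Sum.inl a) with hpickdef
    have hpinj : Function.Injective pick := fun a b h => Sum.inl.inj (hfinj h)
    set e0 : 𝒳 ≃ Fin (Fintype.card 𝒳) := Fintype.equivFin 𝒳 with he0
    set ext : Ranking A → Ranking 𝒳 :=
      fun rA => auxRankOf (auxExt pick e0 rA) (auxExt_inj pick e0 rA) with hext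
    have hextpref : ∀ (rA : Ranking A) (a b : A),
        Ranking.pref (ext rA) (pick a) (pick b) ↔ Ranking.pref rA a b := by
      intro rA a b
      show ext rA (pick a) < ext rA (pick b) ↔ rA a < rA b
      rw [hext]
      rw [auxRankOf_lt_iff, auxExt_pick pick e0 hpinj, auxExt_pick pick e0 hpinj]
      exact Fin.lt_def.symm
    set S0 : A → Finset 𝒳 := fun a => ({pick a} : Finset 𝒳) with hS0
    set lamBar : (A → Finset 𝒳) → ℝ := fun S => if S = S0 then (1 : ℝ) else 0 with hlamBar
    set μ : Ranking 𝒳 → ℝ :=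
      fun r => ∑ rA : Ranking A, if ext rA = r then μA rA else 0 with hμdef
    set Xc : AggCorr A 𝒳 AN :=
      ⟨auxX AN f, auxX_disj AN f hfinj, fun a ha => auxX_card_atomic AN f ha,
        fun a ha => by rw [auxX_card_nonatomic AN f hfinj ha]⟩ with hXc
    have hpickmem : ∀ a, pick a ∈ Xc.X a := fun a => auxX_mem AN f a
    have hμdistr : IsDistr μ := by
      constructor
      · intro r
        apply Finset.sum_nonneg
        intro rA _
        split
        · exact hμA.1 rA
        · exact le_refl 0
      · rw [hμdef]
        exact (aux_sum_pushforward μA ext).trans hμA.2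
    have hlamBardistr : IsDistr lamBar := by
      constructor
      · intro S; rw [hlamBar]; dsimp only; split
        · exact zero_le_one
        · exact le_refl 0
      · rw [hlamBar]
        rw [Finset.sum_ite_eq' Finset.univ S0 (fun _ => (1 : ℝ))]
        simp
    have hlamBarsupp : ∀ S : A → Finset 𝒳, lamBar S ≠ 0 → ∀ a, S a ⊆ Xc.X a ∧ (S a).Nonempty := by
      intro S hS a
      have hSeq : S = S0 := by
        by_contra h
        apply hS
        rw [hlamBar]; dsimp only; rw [if_neg h]
      subst hSeq
      constructor
      · rw [hS0]
        exact Finset.singleton_subset_iff.2 (hpickmem a)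
      · exact ⟨pick a, Finset.mem_singleton_self _⟩
    refine ⟨Xc, μ, fun _ => lamBar, ⟨hμdistr, fun B _ => ⟨hlamBardistr, hlamBarsupp⟩, ?_⟩,
      lamBar, hlamBardistr, hlamBarsupp, fun B _ S' => rfl⟩
    intro B hB a ha
    have point : ∀ G : (A → Finset 𝒳) → ℝ, (∑ S, lamBar S * G S) = G S0 := by
      intro G
      have : ∀ S : A → Finset 𝒳, lamBar S * G S = if S = S0 then G S else 0 := by
        intro S
        rw [hlamBar]; dsimp only
        split
        · rw [one_mul]
        · rw [zero_mul]
      rw [Finset.sum_congr rfl fun S _ => this S,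
        Finset.sum_ite_eq' Finset.univ S0 (fun S => G S)]
      simp
    rw [point]
    have h1 : (probOf (fun r => ∑ rA : Ranking A, if ext rA = r then μA rA else 0)
          fun r => ∃ x ∈ S0 a, ∀ b ∈ B, b ≠ a → ∀ y ∈ S0 b, Ranking.pref r x y)
        = probOf μA (fun rA =>
            ∃ x ∈ S0 a, ∀ b ∈ B, b ≠ a → ∀ y ∈ S0 b, Ranking.pref (ext rA) x y) :=
      aux_probOf_push μA ext _
    rw [hμdef, h1]
    rw [aux_probOf_congr μA (Q := fun rA => ∀ b ∈ B, b ≠ a → Ranking.pref rA a b) ?_]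
    · exact hARU B hB a ha
    · intro rA
      constructor
      · rintro ⟨x, hx, hall⟩ b hb hba
        rw [hS0] at hx
        rw [Finset.mem_singleton] at hx
        subst hx
        have h5 := hall b hb hba (pick b) (by rw [hS0]; exact Finset.mem_singleton_self _)
        exact (hextpref rA a b).1 h5
      · intro hall
        refine ⟨pick a, by rw [hS0]; exact Finset.mem_singleton_self _, ?_⟩
        intro b hb hba y hy
        rw [hS0, Finset.mem_singleton] at hy
        subst hy
        exact (hextpref rA a b).2 (hall b hb hba)
end
end
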